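/- arXiv:2505.06209 — 4 statements merged into one kernel-verified Lean document; each statement's English description precedes it below -/
import Mathlib

section
/- Let n_1, n_2 be currents on the one-dimensional lattice {0,…,N} extended by a ghost vertex g (so each n_i assigns a natural number n_i^Λ(x) to each nearest-neighbor edge (x,x+1) and n_i^g(x) to each ghost edge (x,g)). The event {∂n_1 = ∅, ∂n_2 = {0,N}, and 0 is not connected to g by the edges where n_1 + n_2 is nonzero} holds if and only if: (i) n_1^Λ(x) is even for all x ∈ {0,…,N-1}; (ii) n_2^Λ(x) is odd for all x ∈ {0,…,N-1}; and (iii) n_1^g and n_2^g are identically zero. -/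
open Finset

/-- Total number of arrivals of the lattice current `nL` at the vertex `v` of `{0, …, N}`
(edge `x` joins vertices `x` and `x+1`). -/
def touch (N : ℕ) (nL : Fin N → ℕ) (v : Fin (N + 1)) : ℕ :=
  ∑ x : Fin N, if v = x.castSucc ∨ v = x.succ then nL x else 0

/-- The sum of the ghost current over the vertices to the left of the edge `x`
(i.e. over vertices `y ≤ x`). -/
def lsum (N : ℕ) (ng : Fin (N + 1) → ℕ) (x : Fin N) : ℕ :=
  ∑ y : Fin (N + 1), if (y : ℕ) ≤ (x : ℕ) then ng y else 0

/-- The sum of the ghost current over the vertices to the right of the edge `x`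
(i.e. over vertices `y ≥ x + 1`). -/
def rsum (N : ℕ) (ng : Fin (N + 1) → ℕ) (x : Fin N) : ℕ :=
  ∑ y : Fin (N + 1), if (x : ℕ) + 1 ≤ (y : ℕ) then ng y else 0

/-- The Poisson probability mass function with rate `r`. -/
noncomputable def poisPMF (r : ℝ) (k : ℕ) : ℝ := Real.exp (-r) * r ^ k / (Nat.factorial k)

/-- Adjacency on the lattice `{0,…,N}` extended by a ghost vertex (`none`):
two vertices are adjacent if some edge joining them carries a nonzero current. -/
def curAdj (N : ℕ) (mL : Fin N → ℕ) (mg : Fin (N + 1) → ℕ) :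
    Option (Fin (N + 1)) → Option (Fin (N + 1)) → Prop
  | some u, some v => ∃ x : Fin N, mL x ≠ 0 ∧
      ((u = x.castSucc ∧ v = x.succ) ∨ (u = x.succ ∧ v = x.castSucc))
  | some u, none => mg u ≠ 0
  | none, some v => mg v ≠ 0
  | none, none => False

namespace Aux

def F (N : ℕ) (nL : Fin N → ℕ) (i : ℕ) : ℕ := if h : i < N then nL ⟨i, h⟩ else 0

def G (N : ℕ) (ng : Fin (N + 1) → ℕ) (i : ℕ) : ℕ := if h : i < N + 1 then ng ⟨i, h⟩ else 0

lemma F_apply (N : ℕ) (nL : Fin N → ℕ) (x : Fin N) : F N nL (x : ℕ) = nL x := by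
  simp [F, x.isLt]

lemma G_apply (N : ℕ) (ng : Fin (N + 1) → ℕ) (v : Fin (N + 1)) : G N ng (v : ℕ) = ng v := by
  simp [G, v.isLt]

lemma touch_eq (N : ℕ) (nL : Fin N → ℕ) (v : Fin (N + 1)) :
    touch N nL v = F N nL (v : ℕ) + (if 1 ≤ (v : ℕ) then F N nL ((v : ℕ) - 1) else 0) := by
  have hsplit : ∀ x : Fin N,
      (if v = x.castSucc ∨ v = x.succ then nL x else 0)
        = (fun i => if (v : ℕ) = i then F N nL i else 0) (x : ℕ)
          + (fun i => if (v : ℕ) = i + 1 then F N nL i else 0) (x : ℕ) := by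
    intro x
    have h1 : (v = x.castSucc) ↔ ((v : ℕ) = (x : ℕ)) := by
      rw [Fin.ext_iff]; simp
    have h2 : (v = x.succ) ↔ ((v : ℕ) = (x : ℕ) + 1) := by
      rw [Fin.ext_iff]; simp
    simp only [h1, h2, F_apply]
    by_cases hA : (v : ℕ) = (x : ℕ) <;> by_cases hB : (v : ℕ) = (x : ℕ) + 1 <;>
      simp [hA, hB] <;> omega
  unfold touch
  rw [Finset.sum_congr rfl (fun x _ => hsplit x), Finset.sum_add_distrib]
  congr 1
  · rw [Fin.sum_univ_eq_sum_range (fun i => if (v : ℕ) = i then F N nL i else 0) N,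
      Finset.sum_ite_eq]
    by_cases h : (v : ℕ) < N <;> simp [h, F] <;> omega
  · rw [Fin.sum_univ_eq_sum_range (fun i => if (v : ℕ) = i + 1 then F N nL i else 0) N]
    by_cases h1 : 1 ≤ (v : ℕ)
    · have : ∀ i ∈ Finset.range N,
          (if (v : ℕ) = i + 1 then F N nL i else 0)
            = (if (v : ℕ) - 1 = i then F N nL i else 0) := by
        intro i _
        congr 1
        simp only [eq_iff_iff]
        omega
      rw [Finset.sum_congr rfl this, Finset.sum_ite_eq]
      by_cases h : (v : ℕ) - 1 < N <;> simp [h, h1, F] <;> omega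
    · have hv : (v : ℕ) = 0 := by omega
      simp [hv]

lemma telescope (N : ℕ) (nL : Fin N → ℕ) (j : ℕ) :
    ∑ i ∈ Finset.range (j + 1), (F N nL i + if 1 ≤ i then F N nL (i - 1) else 0)
      = F N nL j + 2 * ∑ i ∈ Finset.range j, F N nL i := by
  induction j with
  | zero => simp
  | succ j ih =>
    rw [Finset.sum_range_succ, ih, Finset.sum_range_succ,
      if_pos (by omega : 1 ≤ j + 1), Nat.add_sub_cancel]
    ring

lemma lsum_eq (N : ℕ) (ng : Fin (N + 1) → ℕ) (x : Fin N) :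
    lsum N ng x = ∑ i ∈ Finset.range ((x : ℕ) + 1), G N ng i := by
  unfold lsum
  have : ∀ y : Fin (N + 1),
      (if (y : ℕ) ≤ (x : ℕ) then ng y else 0)
        = (fun i => if i ∈ Finset.range ((x : ℕ) + 1) then G N ng i else 0) (y : ℕ) := by
    intro y
    simp only [Finset.mem_range, G_apply]
    congr 1
    simp only [eq_iff_iff]
    omega
  rw [Finset.sum_congr rfl (fun y _ => this y),
    Fin.sum_univ_eq_sum_range (fun i => if i ∈ Finset.range ((x : ℕ) + 1) then G N ng i else 0)
      (N + 1), Finset.sum_ite_mem]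
  congr 1
  apply Finset.inter_eq_right.mpr
  intro i hi
  simp only [Finset.mem_range] at *
  have := x.isLt
  omega


lemma z2cancel : ∀ a b c : ZMod 2, c = a + b → a = c + b := by decide

lemma parity (N : ℕ) (nL : Fin N → ℕ) (ng : Fin (N + 1) → ℕ) (x : Fin N) :
    ∑ i ∈ Finset.range ((x : ℕ) + 1),
        (((F N nL i + if 1 ≤ i then F N nL (i - 1) else 0) + G N ng i : ℕ) : ZMod 2)
      = (nL x : ZMod 2) + (lsum N ng x : ZMod 2) := by
  have h := congrArg (Nat.cast : ℕ → ZMod 2) (telescope N nL x)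
  push_cast at h
  push_cast [lsum_eq]
  rw [Finset.sum_add_distrib, h, F_apply]
  have h2 : (2 : ZMod 2) = 0 := rfl
  rw [h2]
  ring


lemma reach (N : ℕ) (mL : Fin N → ℕ) (mg : Fin (N + 1) → ℕ) (K : ℕ) (hK : K ≤ N)
    (hm : ∀ x : Fin N, (x : ℕ) < K → mL x ≠ 0) :
    ∀ k (h : k < N + 1), k ≤ K →
      Relation.ReflTransGen (curAdj N mL mg) (some 0) (some ⟨k, h⟩) := by
  intro k
  induction k with
  | zero =>
    intro h _
    have : (⟨0, h⟩ : Fin (N + 1)) = 0 := by ext; simp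
    rw [this]
  | succ k ih =>
    intro h hk
    have hkN : k < N := by omega
    refine Relation.ReflTransGen.tail (ih (by omega) (by omega)) ?_
    exact ⟨⟨k, hkN⟩, hm _ (by simpa using by omega : (⟨k, hkN⟩ : Fin N).val < K),
      Or.inl ⟨by ext; simp, by ext; simp⟩⟩

end Aux

theorem numerator_event_characterization (N : ℕ) (hN : 0 < N)
    (n1L n2L : Fin N → ℕ) (n1g n2g : Fin (N + 1) → ℕ) :
    ((∀ v : Fin (N + 1), Even (touch N n1L v + n1g v)) ∧ Even (∑ x, n1g x) ∧
      (∀ v : Fin (N + 1), (Odd (touch N n2L v + n2g v) ↔ (v = 0 ∨ v = Fin.last N))) ∧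
      Even (∑ x, n2g x) ∧
      ¬ Relation.ReflTransGen
          (curAdj N (fun x => n1L x + n2L x) (fun x => n1g x + n2g x))
          (some 0) none) ↔
    ((∀ x : Fin N, Even (n1L x)) ∧ (∀ x : Fin N, Odd (n2L x)) ∧
      n1g = 0 ∧ n2g = 0) := by
  constructor
  · rintro ⟨h1, -, h2, -, hconn⟩
    -- parity consequences
    have hsum1 : ∀ x : Fin N, (n1L x : ZMod 2) = (0 : ZMod 2) + (lsum N n1g x : ZMod 2) := by
      intro x
      refine Aux.z2cancel _ _ _ ?_
      rw [← Aux.parity N n1L n1g x]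
      refine (Finset.sum_eq_zero ?_).symm
      intro i hi
      rw [Finset.mem_range] at hi
      have hiN : i < N + 1 := by have := x.isLt; omega
      have he : (Aux.F N n1L i + if 1 ≤ i then Aux.F N n1L (i - 1) else 0) + Aux.G N n1g i
          = touch N n1L ⟨i, hiN⟩ + n1g ⟨i, hiN⟩ := by
        rw [Aux.touch_eq N n1L ⟨i, hiN⟩]
        simp [Aux.G, hiN]
      rw [he, ZMod.natCast_eq_zero_iff_even]
      exact h1 ⟨i, hiN⟩
    have hsum2 : ∀ x : Fin N, (n2L x : ZMod 2) = (1 : ZMod 2) + (lsum N n2g x : ZMod 2) := by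
      intro x
      refine Aux.z2cancel _ _ _ ?_
      rw [← Aux.parity N n2L n2g x]
      have hterm : ∀ i ∈ Finset.range ((x : ℕ) + 1),
          (((Aux.F N n2L i + if 1 ≤ i then Aux.F N n2L (i - 1) else 0) + Aux.G N n2g i : ℕ)
            : ZMod 2) = if i = 0 then (1 : ZMod 2) else 0 := by
        intro i hi
        rw [Finset.mem_range] at hi
        have hxN := x.isLt
        have hiN : i < N + 1 := by omega
        have he : (Aux.F N n2L i + if 1 ≤ i then Aux.F N n2L (i - 1) else 0) + Aux.G N n2g i
            = touch N n2L ⟨i, hiN⟩ + n2g ⟨i, hiN⟩ := by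
          rw [Aux.touch_eq N n2L ⟨i, hiN⟩]
          simp [Aux.G, hiN]
        rw [he]
        by_cases h0 : i = 0
        · subst h0
          rw [if_pos rfl, ZMod.natCast_eq_one_iff_odd]
          exact (h2 ⟨0, hiN⟩).mpr (Or.inl (by ext; simp))
        · rw [if_neg h0, ZMod.natCast_eq_zero_iff_even, ← Nat.not_odd_iff_even]
          intro hodd
          rcases (h2 ⟨i, hiN⟩).mp hodd with hc | hc
          · exact h0 (by simpa [Fin.ext_iff] using hc)
          · have : i = N := by simpa [Fin.ext_iff, Fin.last] using hc
            omega
      rw [Finset.sum_congr rfl hterm,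
        Finset.sum_ite_eq' (Finset.range ((x : ℕ) + 1)) 0 (fun _ => (1 : ZMod 2)),
        if_pos (by simp)]
    -- the ghost currents vanish
    have hg : ∀ v : Fin (N + 1), n1g v + n2g v = 0 := by
      by_contra hgc
      push_neg at hgc
      obtain ⟨w, hw⟩ := hgc
      set S := Finset.univ.filter (fun v : Fin (N + 1) => n1g v + n2g v ≠ 0) with hS
      have hSne : S.Nonempty := ⟨w, Finset.mem_filter.mpr ⟨Finset.mem_univ _, hw⟩⟩
      set m := S.min' hSne with hm
      have hmem : n1g m + n2g m ≠ 0 := (Finset.mem_filter.1 (S.min'_mem hSne)).2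
      have hmin : ∀ v : Fin (N + 1), (v : ℕ) < (m : ℕ) → n1g v + n2g v = 0 := by
        intro v hv
        by_contra hv0
        have hle : m ≤ v := S.min'_le v (Finset.mem_filter.mpr ⟨Finset.mem_univ _, hv0⟩)
        rw [Fin.le_def] at hle
        omega
      have hedge : ∀ x : Fin N, (x : ℕ) < (m : ℕ) → n1L x + n2L x ≠ 0 := by
        intro x hx h0
        have hl1 : lsum N n1g x = 0 := by
          refine Finset.sum_eq_zero ?_
          intro v _
          split
          · have := hmin v (by omega)
            omega
          · rfl
        have hl2 : lsum N n2g x = 0 := by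
          refine Finset.sum_eq_zero ?_
          intro v _
          split
          · have := hmin v (by omega)
            omega
          · rfl
        have e1 := hsum1 x
        have e2 := hsum2 x
        rw [hl1] at e1
        rw [hl2] at e2
        simp only [Nat.cast_zero] at e1 e2
        have : ((n1L x + n2L x : ℕ) : ZMod 2) = 1 := by
          push_cast
          rw [e1, e2]
          decide
        rw [h0] at this
        simp at this
      have hreach := Aux.reach N (fun x => n1L x + n2L x) (fun v => n1g v + n2g v)
        (m : ℕ) (by have := m.isLt; omega) hedge (m : ℕ) m.isLt le_rfl
      have hmeq : (⟨(m : ℕ), m.isLt⟩ : Fin (N + 1)) = m := by ext; rfl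
      rw [hmeq] at hreach
      exact hconn (hreach.tail hmem)
    have hg1 : n1g = 0 := funext fun v => by
      have := hg v; simp only [Pi.zero_apply]; omega
    have hg2 : n2g = 0 := funext fun v => by
      have := hg v; simp only [Pi.zero_apply]; omega
    have hl0 : ∀ (ng : Fin (N + 1) → ℕ), ng = 0 → ∀ x : Fin N, lsum N ng x = 0 := by
      intro ng h x
      subst h
      simp [lsum]
    refine ⟨?_, ?_, hg1, hg2⟩
    · intro x
      have := hsum1 x
      rw [hl0 n1g hg1 x] at this
      simpa [← ZMod.natCast_eq_zero_iff_even] using this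
    · intro x
      have := hsum2 x
      rw [hl0 n2g hg2 x] at this
      simpa [← ZMod.natCast_eq_one_iff_odd] using this
  · rintro ⟨h1, h2, hg1, hg2⟩
    subst hg1
    subst hg2
    have hF1 : ∀ i, Even (Aux.F N n1L i) := by
      intro i
      unfold Aux.F
      split
      · exact h1 _
      · exact Even.zero
    have hF2odd : ∀ i (h : i < N), Odd (Aux.F N n2L i) := by
      intro i h
      unfold Aux.F
      rw [dif_pos h]
      exact h2 _
    have hF2zero : ∀ i, N ≤ i → Aux.F N n2L i = 0 := by
      intro i h
      unfold Aux.F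
      rw [dif_neg (by omega)]
    refine ⟨?_, ?_, ?_, ?_, ?_⟩
    · intro v
      rw [Aux.touch_eq]
      simp only [Pi.zero_apply, add_zero]
      refine (hF1 _).add ?_
      split
      · exact hF1 _
      · exact Even.zero
    · simp
    · intro v
      rw [Aux.touch_eq]
      simp only [Pi.zero_apply, add_zero]
      have hv := v.isLt
      constructor
      · intro hodd
        by_cases h0 : (v : ℕ) = 0
        · exact Or.inl (by ext; simpa using h0)
        · by_cases hl : (v : ℕ) = N
          · exact Or.inr (by ext; simpa [Fin.last] using hl)
          · exfalso
            rw [if_pos (by omega)] at hodd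
            have := (hF2odd (v : ℕ) (by omega)).add_odd (hF2odd ((v : ℕ) - 1) (by omega))
            exact (Nat.not_odd_iff_even.mpr this) hodd
      · rintro (h0 | hl)
        · have h0' : (v : ℕ) = 0 := by rw [h0]; rfl
          rw [h0', if_neg (by omega)]
          simpa using hF2odd 0 hN
        · have hl' : (v : ℕ) = N := by rw [hl]; rfl
          rw [hl', hF2zero N le_rfl, if_pos (by omega : 1 ≤ N), zero_add]
          exact hF2odd (N - 1) (by omega)
    · simp
    · intro hR
      rcases hR.cases_tail with heq | ⟨c, -, hstep⟩
      · exact Option.some_ne_none _ heq.symm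
      · cases c with
        | none => exact hstep
        | some u => exact hstep (by simp)
end

section
/- With P the random current measure on {0,…,N} (edge variables Poisson with rates J_x > 0, ghost variables Poisson with rates h_x ≥ 0, all independent), one has P(∂n^Λ = ∂n^g | Σ_{x=0}^N n^g(x) even) / P(n^Λ(x) even for all x) ≥ ∏_{x=0}^{N-1} (1 + tanh(J_x))/2. -/
open Finset

/-- The product Poisson weight of a pair of a lattice current and a ghost current. -/
noncomputable def rcWeight (N : ℕ) (J : Fin N → ℝ) (h : Fin (N + 1) → ℝ)
    (p : (Fin N → ℕ) × (Fin (N + 1) → ℕ)) : ℝ :=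
  (∏ x : Fin N, poisPMF (J x) (p.1 x)) * ∏ x : Fin (N + 1), poisPMF (h x) (p.2 x)

lemma pois_eq (r z : ℝ) (k : ℕ) :
    poisPMF r k * z ^ k = Real.exp (-r) * ((r * z) ^ k / (Nat.factorial k)) := by
  simp [poisPMF, mul_pow]; ring
lemma summable_pois_mul (r z : ℝ) : Summable fun k => ‖poisPMF r k * z ^ k‖ := by
  simp only [pois_eq]
  have := (Real.summable_pow_div_factorial (|r * z|)).mul_left (Real.exp (-r))
  apply this.of_nonneg_of_le (fun k => norm_nonneg _)
  intro k
  rw [norm_mul, Real.norm_eq_abs, abs_of_pos (Real.exp_pos _), Real.norm_eq_abs, abs_div,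
    abs_pow, Nat.abs_cast]
lemma tsum_pois_mul (r z : ℝ) : ∑' k, poisPMF r k * z ^ k = Real.exp (r * z - r) := by
  simp only [pois_eq]
  rw [tsum_mul_left]
  have : ∑' k : ℕ, (r * z) ^ k / (Nat.factorial k) = Real.exp (r * z) := by
    rw [Real.exp_eq_exp_ℝ, NormedSpace.exp_eq_tsum_div]
  rw [this, ← Real.exp_add]; ring_nf
lemma summable_pois_norm (r : ℝ) : Summable fun k => ‖poisPMF r k‖ := by
  simpa using summable_pois_mul r 1
lemma tsum_pois (r : ℝ) : ∑' k, poisPMF r k = 1 := by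
  have := tsum_pois_mul r 1
  simpa using this
lemma pois_nonneg {r : ℝ} (hr : 0 ≤ r) (k : ℕ) : 0 ≤ poisPMF r k := by
  unfold poisPMF; positivity

-- new material
lemma tsum_pois_sign (r : ℝ) (m : ℕ) :
    ∑' k, poisPMF r k * ((-1 : ℝ) ^ m) ^ k = if Even m then 1 else Real.exp (-(2 * r)) := by
  rcases Nat.even_or_odd m with hm | hm
  · simp only [hm.neg_one_pow, one_pow, mul_one, if_pos hm, tsum_pois]
  · rw [hm.neg_one_pow, if_neg (Nat.not_even_iff_odd.2 hm), tsum_pois_mul]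
    congr 1; ring
lemma summable_ite_norm {f : ℕ → ℝ} (hf : Summable fun k => ‖f k‖) (P : ℕ → Prop)
    [DecidablePred P] : Summable fun k => ‖if P k then f k else 0‖ := by
  apply hf.of_nonneg_of_le (fun k => norm_nonneg _)
  intro k; by_cases hP : P k <;> simp [hP]
lemma tsum_pois_parity (r : ℝ) (L : ℕ) :
    (∑' k, if (Odd k ↔ Odd L) then poisPMF r k else 0)
      = (1 + (-1 : ℝ) ^ L * Real.exp (-(2 * r))) / 2 := by
  have h1 : Summable fun k => poisPMF r k := (summable_pois_norm r).of_norm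
  have h2 : Summable fun k => poisPMF r k * (-1 : ℝ) ^ k := (summable_pois_mul r (-1)).of_norm
  have hpt : ∀ k, (if (Odd k ↔ Odd L) then poisPMF r k else 0)
      = (poisPMF r k + (-1 : ℝ) ^ L * (poisPMF r k * (-1) ^ k)) / 2 := by
    intro k
    rcases Nat.even_or_odd k with hk | hk <;> rcases Nat.even_or_odd L with hL | hL <;>
        simp only [hk.neg_one_pow, hL.neg_one_pow]
    · rw [if_pos (by simp [Nat.not_odd_iff_even.2 hk, Nat.not_odd_iff_even.2 hL])]; ring
    · rw [if_neg (by simp [Nat.not_odd_iff_even.2 hk, hL])]; ring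
    · rw [if_neg (by simp [hk, Nat.not_odd_iff_even.2 hL])]; ring
    · rw [if_pos (by simp [hk, hL])]; ring
  rw [tsum_congr hpt]
  calc (∑' k, (poisPMF r k + (-1 : ℝ) ^ L * (poisPMF r k * (-1) ^ k)) / 2)
      = ((∑' k, poisPMF r k) + (-1 : ℝ) ^ L * ∑' k, poisPMF r k * (-1) ^ k) / 2 := by
        rw [tsum_div_const, Summable.tsum_add h1 (h2.mul_left _), tsum_mul_left]
    _ = (1 + (-1 : ℝ) ^ L * Real.exp (-(2 * r))) / 2 := by
        rw [tsum_pois]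
        have : ∑' k, poisPMF r k * (-1 : ℝ) ^ k = Real.exp (-(2*r)) := by
          rw [tsum_pois_mul]; congr 1; ring
        rw [this]
lemma tsum_pois_even (r : ℝ) :
    (∑' k, if Even k then poisPMF r k else 0) = (1 + Real.exp (-(2 * r))) / 2 := by
  have : ∀ k : ℕ, (if Even k then poisPMF r k else 0)
      = (if (Odd k ↔ Odd 0) then poisPMF r k else 0) := by
    intro k
    refine if_congr ?_ rfl rfl
    rw [Nat.even_iff, Nat.odd_iff, Nat.odd_iff]
    omega
  rw [tsum_congr this, tsum_pois_parity]
  norm_num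

lemma pi_tsum : ∀ (n : ℕ) (f : Fin n → ℕ → ℝ), (∀ i, Summable fun k => ‖f i k‖) →
    (Summable fun g : Fin n → ℕ => ‖∏ i, f i (g i)‖) ∧
    (∑' g : Fin n → ℕ, ∏ i, f i (g i)) = ∏ i, ∑' k, f i k := by
  intro n
  induction n with
  | zero =>
    intro f hf
    constructor
    · exact .of_finite
    · rw [tsum_eq_single (fun i => i.elim0) (by
        intro b hb; exact absurd (funext fun i => i.elim0) (Ne.symm hb))]
      simp
  | succ n ih =>
    intro f hf
    obtain ⟨ihS, ihT⟩ := ih (fun i => f i.succ) (fun i => hf i.succ)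
    obtain ⟨e, he⟩ : ∃ e : (Fin (n+1) → ℕ) ≃ ℕ × (Fin n → ℕ),
        ∀ g, e g = (g 0, fun i => g i.succ) := ⟨(Fin.consEquiv fun _ => ℕ).symm, fun _ => rfl⟩
    have hFs : Summable fun p : ℕ × (Fin n → ℕ) =>
        ‖f 0 p.1 * ∏ i : Fin n, f i.succ (p.2 i)‖ :=
      Summable.mul_norm (f := f 0)
        (g := fun g : Fin n → ℕ => ∏ i : Fin n, f i.succ (g i)) (hf 0) ihS
    have key : ((∑' k, f 0 k) * ∑' g : Fin n → ℕ, ∏ i : Fin n, f i.succ (g i))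
        = ∑' p : ℕ × (Fin n → ℕ), f 0 p.1 * ∏ i : Fin n, f i.succ (p.2 i) :=
      tsum_mul_tsum_of_summable_norm (hf 0) ihS
    have hprod : ∀ g : Fin (n+1) → ℕ, (∏ i, f i (g i)) =
        f 0 (e g).1 * ∏ i : Fin n, f i.succ ((e g).2 i) := by
      intro g; rw [he, Fin.prod_univ_succ]
    constructor
    · have : Summable fun g : Fin (n+1) → ℕ =>
          ‖f 0 (e g).1 * ∏ i : Fin n, f i.succ ((e g).2 i)‖ :=
        (e.summable_iff (f := fun p : ℕ × (Fin n → ℕ) =>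
          ‖f 0 p.1 * ∏ i : Fin n, f i.succ (p.2 i)‖)).2 hFs
      simpa only [← hprod] using this
    · calc ∑' g : Fin (n+1) → ℕ, ∏ i, f i (g i)
          = ∑' g : Fin (n+1) → ℕ, f 0 (e g).1 * ∏ i : Fin n, f i.succ ((e g).2 i) :=
            tsum_congr hprod
        _ = ∑' p : ℕ × (Fin n → ℕ), f 0 p.1 * ∏ i : Fin n, f i.succ (p.2 i) :=
            e.tsum_eq fun p : ℕ × (Fin n → ℕ) => f 0 p.1 * ∏ i : Fin n, f i.succ (p.2 i)
        _ = ∏ i, ∑' k, f i k := by rw [← key, ihT, Fin.prod_univ_succ]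

def Pz (N : ℕ) (nL : Fin N → ℕ) (i : ℕ) : ZMod 2 :=
  if h : i < N then (nL ⟨i, h⟩ : ZMod 2) else 0

def Gz (N : ℕ) (ng : Fin (N + 1) → ℕ) (i : ℕ) : ZMod 2 :=
  if h : i < N + 1 then (ng ⟨i, h⟩ : ZMod 2) else 0

def Fz (N : ℕ) (nL : Fin N → ℕ) (w : ℕ) : ZMod 2 := ∑ i ∈ Finset.range w, Pz N nL i

def Gp (N : ℕ) (ng : Fin (N + 1) → ℕ) (w : ℕ) : ZMod 2 := ∑ i ∈ Finset.range w, Gz N ng i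

lemma natCast_zmod2 (a : ℕ) : (a : ZMod 2) = if Odd a then 1 else 0 := by
  induction a with
  | zero => simp
  | succ a ih =>
    push_cast
    rcases Nat.even_or_odd a with h | h
    · simp [Nat.odd_add_one, h, Nat.not_odd_iff_even.2 h, ih]
    · simp [Nat.odd_add_one, h, Nat.not_odd_iff_even, ih]
      decide

lemma oddIff (a b : ℕ) : ((a : ZMod 2) = (b : ZMod 2)) ↔ (Odd a ↔ Odd b) := by
  rw [natCast_zmod2, natCast_zmod2]
  by_cases ha : Odd a <;> by_cases hb : Odd b <;> simp [ha, hb]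

lemma evenIff (a : ℕ) : ((a : ZMod 2) = 0) ↔ Even a := by
  rw [natCast_zmod2, ← Nat.not_odd_iff_even]
  by_cases ha : Odd a <;> simp [ha]

lemma sum_cut {M : Type*} [AddCommMonoid M] (f : ℕ → M) (n m : ℕ) (h : m ≤ n) :
    (∑ i ∈ Finset.range n, if i < m then f i else 0) = ∑ i ∈ Finset.range m, f i := by
  rw [← Finset.sum_filter]
  congr 1
  ext i
  simp only [Finset.mem_filter, Finset.mem_range]
  omega

lemma Fz_succ (N : ℕ) (nL : Fin N → ℕ) (w : ℕ) :
    Fz N nL (w + 1) = Fz N nL w + Pz N nL w := Finset.sum_range_succ _ _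

lemma Gp_succ (N : ℕ) (ng : Fin (N + 1) → ℕ) (w : ℕ) :
    Gp N ng (w + 1) = Gp N ng w + Gz N ng w := Finset.sum_range_succ _ _

lemma touch_cast (N : ℕ) (nL : Fin N → ℕ) (v : Fin (N + 1)) :
    ((touch N nL v : ℕ) : ZMod 2) = Fz N nL (v.1 + 1) + Fz N nL (v.1 - 1) := by
  have hsplit : Fz N nL (v.1 + 1) = Fz N nL (v.1 - 1) +
      ∑ i ∈ Finset.Ico (v.1 - 1) (v.1 + 1), Pz N nL i := by
    rw [Fz, Fz, Finset.range_eq_Ico, Finset.range_eq_Ico]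
    exact (Finset.sum_Ico_consecutive (Pz N nL) (Nat.zero_le _) (by omega : v.1 - 1 ≤ v.1 + 1)).symm
  have htwo : (2 : ZMod 2) = 0 := by decide
  have hI : Fz N nL (v.1 + 1) + Fz N nL (v.1 - 1)
      = ∑ i ∈ Finset.Ico (v.1 - 1) (v.1 + 1), Pz N nL i := by
    linear_combination hsplit + Fz N nL (v.1 - 1) * htwo
  rw [hI]
  -- now cast the touch sum
  rw [touch, Nat.cast_sum]
  have hterm : ∀ x : Fin N, ((if v = x.castSucc ∨ v = x.succ then nL x else 0 : ℕ) : ZMod 2)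
      = (fun i => if v.1 - 1 ≤ i ∧ i < v.1 + 1 then Pz N nL i else 0) x.1 := by
    intro x
    have hc : (v = x.castSucc ∨ v = x.succ) ↔ (v.1 - 1 ≤ x.1 ∧ x.1 < v.1 + 1) := by
      rw [Fin.ext_iff, Fin.ext_iff, Fin.coe_castSucc, Fin.val_succ]
      omega
    have hp : Pz N nL x.1 = (nL x : ZMod 2) := by simp [Pz, x.2]
    simp only [apply_ite (fun a : ℕ => (a : ZMod 2)), Nat.cast_zero, hc, hp]
  rw [Finset.sum_congr rfl (fun x _ => hterm x),
    Fin.sum_univ_eq_sum_range (fun i => if v.1 - 1 ≤ i ∧ i < v.1 + 1 then Pz N nL i else 0) N]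
  rw [← Finset.sum_filter]
  apply Finset.sum_subset
  · intro i hi
    simp only [Finset.mem_filter, Finset.mem_range, Finset.mem_Ico] at *
    omega
  · intro i hi hni
    simp only [Finset.mem_filter, Finset.mem_range, Finset.mem_Ico] at *
    have : ¬ i < N := fun hlt => hni ⟨hlt, hi⟩
    simp [Pz, this]

lemma lsum_cast (N : ℕ) (ng : Fin (N + 1) → ℕ) (x : Fin N) :
    ((lsum N ng x : ℕ) : ZMod 2) = Gp N ng (x.1 + 1) := by
  rw [lsum, Nat.cast_sum]
  have hterm : ∀ y : Fin (N + 1), ((if (y : ℕ) ≤ (x : ℕ) then ng y else 0 : ℕ) : ZMod 2)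
      = (fun i => if i < x.1 + 1 then Gz N ng i else 0) y.1 := by
    intro y
    have hg : Gz N ng y.1 = (ng y : ZMod 2) := by simp [Gz, y.2]
    simp [Nat.lt_succ_iff, hg, apply_ite (fun a : ℕ => (a : ZMod 2))]
  rw [Finset.sum_congr rfl (fun y _ => hterm y),
    Fin.sum_univ_eq_sum_range (fun i => if i < x.1 + 1 then Gz N ng i else 0) (N + 1)]
  exact sum_cut _ _ _ (by omega)

lemma total_cast (N : ℕ) (ng : Fin (N + 1) → ℕ) :
    ((∑ y, ng y : ℕ) : ZMod 2) = Gp N ng (N + 1) := by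
  rw [Nat.cast_sum]
  have hterm : ∀ y : Fin (N + 1), ((ng y : ℕ) : ZMod 2) = (fun i => Gz N ng i) y.1 := by
    intro y; simp [Gz, y.2]
  rw [Finset.sum_congr rfl (fun y _ => hterm y),
    Fin.sum_univ_eq_sum_range (fun i => Gz N ng i) (N + 1)]
  rfl

lemma cond_iff (N : ℕ) (nL : Fin N → ℕ) (ng : Fin (N + 1) → ℕ) :
    ((∀ v : Fin (N + 1), (Odd (touch N nL v) ↔ Odd (ng v))) ∧ Even (∑ x, ng x)) ↔
    ((∀ x : Fin N, (Odd (nL x) ↔ Odd (lsum N ng x))) ∧ Even (∑ x, ng x)) := by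
  have hGz : ∀ v : Fin (N + 1), Gz N ng v.1 = (ng v : ZMod 2) := fun v => by simp [Gz, v.2]
  have hPz : ∀ x : Fin N, Pz N nL x.1 = (nL x : ZMod 2) := fun x => by simp [Pz, x.2]
  have htwo : (2 : ZMod 2) = 0 := by decide
  constructor
  · rintro ⟨H, hE⟩
    refine ⟨?_, hE⟩
    have H' : ∀ v : Fin (N + 1), Fz N nL (v.1 + 1) + Fz N nL (v.1 - 1) = Gz N ng v.1 := by
      intro v
      have := (oddIff (touch N nL v) (ng v)).2 (H v)
      rw [touch_cast] at this
      rw [hGz]; exact this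
    have K : ∀ w, w ≤ N + 1 → Gp N ng w = Fz N nL w + Fz N nL (w - 1) := by
      intro w
      induction w with
      | zero => intro _; simp [Gp, Fz]
      | succ w ihw =>
        intro hw
        have h1 := ihw (by omega)
        have h2 : Fz N nL (w + 1) + Fz N nL (w - 1) = Gz N ng w := H' ⟨w, by omega⟩
        rw [Gp_succ, h1]
        simp only [Nat.add_sub_cancel]
        linear_combination h2 + (Gz N ng w - Fz N nL (w + 1)) * htwo
    intro x
    rw [← oddIff, lsum_cast]
    have h1 := K (x.1 + 1) (by omega)
    have h2 := Fz_succ N nL x.1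
    rw [← hPz x, h1]
    simp only [Nat.add_sub_cancel]
    linear_combination h2 + (Pz N nL x.1 - Fz N nL (x.1 + 1)) * htwo
  · rintro ⟨R, hE⟩
    refine ⟨?_, hE⟩
    have hEz : Gp N ng (N + 1) = 0 := by
      rw [← total_cast]; exact (evenIff _).2 hE
    have R' : ∀ i, Pz N nL i = if h : i < N then Gp N ng (i + 1) else 0 := by
      intro i
      by_cases hi : i < N
      · rw [dif_pos hi]
        have := (oddIff _ _).2 (R ⟨i, hi⟩)
        rw [lsum_cast] at this
        rw [← this, hPz ⟨i, hi⟩]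
      · simp [Pz, hi]
    have K2 : ∀ w, w ≤ N + 1 → Fz N nL w + Fz N nL (w - 1) = Gp N ng w := by
      intro w hw
      match w with
      | 0 => simp [Fz, Gp]
      | (w + 1) =>
        have h2 := Fz_succ N nL w
        have h3 := R' w
        simp only [Nat.add_sub_cancel]
        by_cases hwN : w < N
        · rw [dif_pos hwN] at h3
          linear_combination h2 + h3 + Fz N nL w * htwo
        · have hw' : w = N := by omega
          rw [dif_neg hwN] at h3
          rw [hw'] at h2 h3 ⊢
          linear_combination h2 + h3 - hEz + Fz N nL N * htwo
    intro v
    rw [← oddIff, touch_cast, ← hGz v]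
    have k1 := K2 (v.1 + 1) (by omega)
    have k2 := K2 v.1 (by omega)
    have hGp := Gp_succ N ng v.1
    simp only [Nat.add_sub_cancel] at k1
    linear_combination k1 + k2 + hGp + (Gp N ng v.1 - Fz N nL v.1) * htwo

lemma even_ind (c : ℝ) (s : ℕ) : (if Even s then c else 0) = (c + c * (-1 : ℝ) ^ s) / 2 := by
  rcases Nat.even_or_odd s with hs | hs
  · rw [if_pos hs, hs.neg_one_pow]; ring
  · rw [if_neg (Nat.not_even_iff_odd.2 hs), hs.neg_one_pow]; ring

section Main
variable (N : ℕ) (J : Fin N → ℝ) (h : Fin (N + 1) → ℝ)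

noncomputable def WL (nL : Fin N → ℕ) : ℝ := ∏ x, poisPMF (J x) (nL x)
noncomputable def Wg (ng : Fin (N + 1) → ℕ) : ℝ := ∏ y, poisPMF (h y) (ng y)
noncomputable def Zm (m : Fin (N + 1) → ℕ) (ng : Fin (N + 1) → ℕ) : ℝ :=
  ∏ y, poisPMF (h y) (ng y) * ((-1 : ℝ) ^ (m y)) ^ (ng y)

lemma WL_summable : Summable fun nL => ‖WL N J nL‖ :=
  (pi_tsum N (fun x k => poisPMF (J x) k) (fun x => summable_pois_norm (J x))).1

lemma WL_tsum : ∑' nL, WL N J nL = 1 := by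
  simp only [WL]
  rw [(pi_tsum N (fun x k => poisPMF (J x) k) (fun x => summable_pois_norm (J x))).2]
  simp [tsum_pois]

lemma Wg_summable : Summable fun ng => ‖Wg N h ng‖ :=
  (pi_tsum (N + 1) (fun y k => poisPMF (h y) k) (fun y => summable_pois_norm (h y))).1

lemma Wg_tsum : ∑' ng, Wg N h ng = 1 := by
  simp only [Wg]
  rw [(pi_tsum (N + 1) (fun y k => poisPMF (h y) k) (fun y => summable_pois_norm (h y))).2]
  simp [tsum_pois]

lemma Zm_summable (m : Fin (N + 1) → ℕ) : Summable fun ng => ‖Zm N h m ng‖ :=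
  (pi_tsum (N + 1) (fun y k => poisPMF (h y) k * ((-1 : ℝ) ^ (m y)) ^ k)
    (fun y => summable_pois_mul (h y) _)).1

lemma Zm_tsum (m : Fin (N + 1) → ℕ) :
    ∑' ng, Zm N h m ng = ∏ y, (if Even (m y) then 1 else Real.exp (-(2 * h y))) := by
  simp only [Zm]
  rw [(pi_tsum (N + 1) (fun y k => poisPMF (h y) k * ((-1 : ℝ) ^ (m y)) ^ k)
    (fun y => summable_pois_mul (h y) _)).2]
  exact Finset.prod_congr rfl fun y _ => tsum_pois_sign (h y) (m y)

lemma Wg_sign (ng : Fin (N + 1) → ℕ) (m : Fin (N + 1) → ℕ) :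
    Wg N h ng * ∏ y, ((-1 : ℝ) ^ (m y)) ^ (ng y) = Zm N h m ng := by
  simp only [Wg, Zm]
  rw [← Finset.prod_mul_distrib]

lemma Wg_sign_total (ng : Fin (N + 1) → ℕ) :
    Wg N h ng * (-1 : ℝ) ^ (∑ y, ng y) = Zm N h (fun _ => 1) ng := by
  rw [← Wg_sign]
  congr 1
  rw [← Finset.prod_pow_eq_pow_sum]
  exact Finset.prod_congr rfl fun y _ => by rw [pow_one]
end Main

section Main2
variable (N : ℕ) (J : Fin N → ℝ) (h : Fin (N + 1) → ℝ)

lemma rc_eq (p : (Fin N → ℕ) × (Fin (N + 1) → ℕ)) :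
    rcWeight N J h p = WL N J p.1 * Wg N h p.2 := rfl

lemma rc_summable : Summable (rcWeight N J h) := by
  have := summable_mul_of_summable_norm (WL_summable N J) (Wg_summable N h)
  exact this.congr fun p => (rc_eq N J h p).symm

lemma calcC :
    (∑' p : (Fin N → ℕ) × (Fin (N + 1) → ℕ),
        if (∀ x, Even (p.1 x)) then rcWeight N J h p else 0)
      = ∏ x, (1 + Real.exp (-(2 * J x))) / 2 := by
  have hE := pi_tsum N (fun x k => if Even k then poisPMF (J x) k else 0)
    (fun x => summable_ite_norm (summable_pois_norm (J x)) _)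
  have hpt : ∀ p : (Fin N → ℕ) × (Fin (N + 1) → ℕ),
      (if (∀ x, Even (p.1 x)) then rcWeight N J h p else 0)
      = (∏ x, if Even (p.1 x) then poisPMF (J x) (p.1 x) else 0) * Wg N h p.2 := by
    intro p
    by_cases hc : ∀ x, Even (p.1 x)
    · rw [if_pos hc, rc_eq]
      congr 1
      exact Finset.prod_congr rfl fun x _ => (if_pos (hc x)).symm
    · rw [if_neg hc]
      push_neg at hc
      obtain ⟨x₀, hx₀⟩ := hc
      rw [Finset.prod_eq_zero (Finset.mem_univ x₀)
        (show (if Even (p.1 x₀) then poisPMF (J x₀) (p.1 x₀) else 0) = 0 from if_neg hx₀),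
        zero_mul]
  rw [tsum_congr hpt,
    ← tsum_mul_tsum_of_summable_norm hE.1 (Wg_summable N h), Wg_tsum, mul_one, hE.2]
  exact Finset.prod_congr rfl fun x _ => tsum_pois_even (J x)

lemma calcB :
    (∑' p : (Fin N → ℕ) × (Fin (N + 1) → ℕ),
        if Even (∑ x, p.2 x) then rcWeight N J h p else 0)
      = (1 + ∏ y, Real.exp (-(2 * h y))) / 2 := by
  have hBn : Summable fun ng => ‖if Even (∑ y, ng y) then Wg N h ng else 0‖ := by
    apply (Wg_summable N h).of_nonneg_of_le (fun k => norm_nonneg _)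
    intro ng; by_cases hP : Even (∑ y, ng y) <;> simp [hP]
  have hpt : ∀ p : (Fin N → ℕ) × (Fin (N + 1) → ℕ),
      (if Even (∑ x, p.2 x) then rcWeight N J h p else 0)
      = WL N J p.1 * (if Even (∑ y, p.2 y) then Wg N h p.2 else 0) := by
    intro p
    by_cases hc : Even (∑ y, p.2 y)
    · rw [if_pos hc, if_pos hc, rc_eq]
    · rw [if_neg hc, if_neg hc, mul_zero]
  rw [tsum_congr hpt, ← tsum_mul_tsum_of_summable_norm (WL_summable N J) hBn, WL_tsum, one_mul]
  have hpt2 : ∀ ng : Fin (N + 1) → ℕ, (if Even (∑ y, ng y) then Wg N h ng else 0)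
      = (Wg N h ng + Zm N h (fun _ => 1) ng) / 2 := by
    intro ng
    rw [even_ind, Wg_sign_total]
  rw [tsum_congr hpt2, tsum_div_const,
    Summable.tsum_add ((Wg_summable N h).of_norm) ((Zm_summable N h _).of_norm), Wg_tsum, Zm_tsum]
  norm_num
end Main2


def mT (N : ℕ) (t : Finset (Fin N)) (y : Fin (N + 1)) : ℕ :=
  (t.filter fun x : Fin N => (y : ℕ) ≤ (x : ℕ)).card

section MainA
variable (N : ℕ) (J : Fin N → ℝ) (h : Fin (N + 1) → ℝ)

lemma sum_lsum (ng : Fin (N + 1) → ℕ) (t : Finset (Fin N)) :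
    ∑ x ∈ t, lsum N ng x = ∑ y : Fin (N + 1), mT N t y * ng y := by
  simp only [lsum, mT]
  rw [Finset.sum_comm]
  refine Finset.sum_congr rfl fun y _ => ?_
  rw [← Finset.sum_filter, Finset.sum_const, smul_eq_mul]

lemma prod_eps (ng : Fin (N + 1) → ℕ) (t : Finset (Fin N)) :
    (∏ x ∈ t, (-1 : ℝ) ^ (lsum N ng x)) = ∏ y, ((-1 : ℝ) ^ (mT N t y)) ^ (ng y) := by
  rw [Finset.prod_pow_eq_pow_sum, sum_lsum, ← Finset.prod_pow_eq_pow_sum]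
  exact Finset.prod_congr rfl fun y _ => pow_mul _ _ _

lemma Wg_sign_succ (ng : Fin (N + 1) → ℕ) (m : Fin (N + 1) → ℕ) :
    Wg N h ng * ((-1 : ℝ) ^ (∑ y, ng y) * ∏ y, ((-1 : ℝ) ^ (m y)) ^ (ng y))
      = Zm N h (fun y => m y + 1) ng := by
  have key : (-1 : ℝ) ^ (∑ y, ng y) * ∏ y, ((-1 : ℝ) ^ (m y)) ^ (ng y)
      = ∏ y, ((-1 : ℝ) ^ (m y + 1)) ^ (ng y) := by
    rw [← Finset.prod_pow_eq_pow_sum Finset.univ ng (-1 : ℝ), ← Finset.prod_mul_distrib]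
    exact Finset.prod_congr rfl fun y _ => by rw [← mul_pow, ← pow_succ']
  rw [key, Wg_sign]

lemma ptA (ng : Fin (N + 1) → ℕ) :
    (if Even (∑ y, ng y) then Wg N h ng else 0) *
        ∏ x, ((1 + (-1 : ℝ) ^ (lsum N ng x) * Real.exp (-(2 * J x))) / 2)
      = (∏ _x : Fin N, ((1 : ℝ) / 2)) * ∑ t ∈ (Finset.univ : Finset (Fin N)).powerset,
          (∏ x ∈ t, Real.exp (-(2 * J x))) *
            ((Zm N h (mT N t) ng + Zm N h (fun y => mT N t y + 1) ng) / 2) := by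
  have hsplit : (∏ x, ((1 + (-1 : ℝ) ^ (lsum N ng x) * Real.exp (-(2 * J x))) / 2))
      = (∏ _x : Fin N, ((1 : ℝ) / 2)) *
        ∏ x, (1 + (-1 : ℝ) ^ (lsum N ng x) * Real.exp (-(2 * J x))) := by
    rw [← Finset.prod_mul_distrib]
    exact Finset.prod_congr rfl fun x _ => by ring
  rw [hsplit]
  have hexp : (∏ x, (1 + (-1 : ℝ) ^ (lsum N ng x) * Real.exp (-(2 * J x))))
      = ∑ t ∈ (Finset.univ : Finset (Fin N)).powerset,
          ∏ x ∈ t, ((-1 : ℝ) ^ (lsum N ng x) * Real.exp (-(2 * J x))) := by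
    have := Finset.prod_add (fun x => (-1 : ℝ) ^ (lsum N ng x) * Real.exp (-(2 * J x)))
      (fun _ => (1 : ℝ)) Finset.univ
    simp only [Finset.prod_const_one, mul_one] at this
    rw [← this]
    exact Finset.prod_congr rfl fun x _ => by ring
  rw [hexp]
  simp only [Finset.mul_sum]
  refine Finset.sum_congr rfl fun t _ => ?_
  rw [even_ind, Finset.prod_mul_distrib, prod_eps, ← Wg_sign N h ng (mT N t),
    ← Wg_sign_succ N h ng (mT N t)]
  ring

lemma innerA (ng : Fin (N + 1) → ℕ) :
    (∑' nL : Fin N → ℕ,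
        ∏ x, if (Odd (nL x) ↔ Odd (lsum N ng x)) then poisPMF (J x) (nL x) else 0)
      = ∏ x, ((1 + (-1 : ℝ) ^ (lsum N ng x) * Real.exp (-(2 * J x))) / 2) := by
  rw [(pi_tsum N (fun x k => if (Odd k ↔ Odd (lsum N ng x)) then poisPMF (J x) k else 0)
      (fun x => summable_ite_norm (summable_pois_norm (J x)) _)).2]
  exact Finset.prod_congr rfl fun x _ => tsum_pois_parity (J x) (lsum N ng x)

lemma innerA_summable (ng : Fin (N + 1) → ℕ) :
    Summable fun nL : Fin N → ℕ =>
      ∏ x, if (Odd (nL x) ↔ Odd (lsum N ng x)) then poisPMF (J x) (nL x) else 0 :=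
  ((pi_tsum N (fun x k => if (Odd k ↔ Odd (lsum N ng x)) then poisPMF (J x) k else 0)
      (fun x => summable_ite_norm (summable_pois_norm (J x)) _)).1).of_norm

lemma calcA (hJ : ∀ x, 0 < J x) (hh : ∀ x, 0 ≤ h x) :
    (∑' p : (Fin N → ℕ) × (Fin (N + 1) → ℕ),
        if (∀ v : Fin (N + 1), (Odd (touch N p.1 v) ↔ Odd (p.2 v))) ∧
            Even (∑ x, p.2 x) then rcWeight N J h p else 0)
      = ∑' ng : Fin (N + 1) → ℕ, (if Even (∑ y, ng y) then Wg N h ng else 0) *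
          ∏ x, ((1 + (-1 : ℝ) ^ (lsum N ng x) * Real.exp (-(2 * J x))) / 2) := by
  have hrcnn : ∀ p, 0 ≤ rcWeight N J h p := by
    intro p
    rw [rc_eq]
    simp only [WL, Wg]
    exact mul_nonneg (Finset.prod_nonneg fun x _ => pois_nonneg (hJ x).le _)
      (Finset.prod_nonneg fun y _ => pois_nonneg (hh y) _)
  set f : (Fin N → ℕ) × (Fin (N + 1) → ℕ) → ℝ := fun p =>
    if (∀ v : Fin (N + 1), (Odd (touch N p.1 v) ↔ Odd (p.2 v))) ∧ Even (∑ x, p.2 x)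
      then rcWeight N J h p else 0 with hf
  have hfpt : ∀ p, f p = (if Even (∑ y, p.2 y) then Wg N h p.2 else 0) *
      ∏ x, (if (Odd (p.1 x) ↔ Odd (lsum N p.2 x)) then poisPMF (J x) (p.1 x) else 0) := by
    intro p
    rw [hf]
    simp only
    rw [if_congr (cond_iff N p.1 p.2) rfl rfl]
    by_cases hE : Even (∑ x, p.2 x)
    · by_cases hO : ∀ x, Odd (p.1 x) ↔ Odd (lsum N p.2 x)
      · rw [if_pos ⟨hO, hE⟩, if_pos hE, rc_eq, mul_comm]
        congr 1
        simp only [WL]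
        exact Finset.prod_congr rfl fun x _ => (if_pos (hO x)).symm
      · rw [if_neg (fun c => hO c.1)]
        push_neg at hO
        obtain ⟨x₀, hx₀⟩ := hO
        rw [Finset.prod_eq_zero (Finset.mem_univ x₀)
          (show (if (Odd (p.1 x₀) ↔ Odd (lsum N p.2 x₀)) then poisPMF (J x₀) (p.1 x₀) else 0) = 0
            from if_neg (by tauto)), mul_zero]
    · rw [if_neg (fun c => hE c.2), if_neg hE, zero_mul]
  have hfs : Summable f := by
    apply (rc_summable N J h).of_nonneg_of_le
    · intro p; rw [hf]; simp only; split
      · exact hrcnn p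
      · exact le_rfl
    · intro p; rw [hf]; simp only; split
      · exact le_rfl
      · exact hrcnn p
  have hswap : Summable fun q : (Fin (N + 1) → ℕ) × (Fin N → ℕ) => f (q.2, q.1) :=
    (((Equiv.prodComm (Fin (N + 1) → ℕ) (Fin N → ℕ)).summable_iff).2 hfs).congr fun q => rfl
  have hinner : ∀ ng : Fin (N + 1) → ℕ, Summable fun nL : Fin N → ℕ => f (nL, ng) := by
    intro ng
    apply ((innerA_summable N J ng).mul_left
      (if Even (∑ y, ng y) then Wg N h ng else 0)).congr
    intro nL
    exact (hfpt (nL, ng)).symm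
  calc ∑' p, f p
      = ∑' q : (Fin (N + 1) → ℕ) × (Fin N → ℕ), f (q.2, q.1) :=
        (((Equiv.prodComm (Fin (N + 1) → ℕ) (Fin N → ℕ)).tsum_eq f).symm).trans
          (tsum_congr fun q => rfl)
    _ = ∑' ng, ∑' nL, f (nL, ng) := Summable.tsum_prod' hswap hinner
    _ = ∑' ng : Fin (N + 1) → ℕ, (if Even (∑ y, ng y) then Wg N h ng else 0) *
          ∏ x, ((1 + (-1 : ℝ) ^ (lsum N ng x) * Real.exp (-(2 * J x))) / 2) := by
        refine tsum_congr fun ng => ?_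
        rw [tsum_congr (fun nL => hfpt (nL, ng))]
        dsimp only
        exact (Summable.tsum_mul_left (if Even (∑ y, ng y) then Wg N h ng else 0) (innerA_summable N J ng)).trans (congrArg _ (innerA N J ng))

lemma theta_val (t : Finset (Fin N)) :
    (∑' ng, (∏ x ∈ t, Real.exp (-(2 * J x))) *
        ((Zm N h (mT N t) ng + Zm N h (fun y => mT N t y + 1) ng) / 2))
      = (∏ x ∈ t, Real.exp (-(2 * J x))) *
        (((∏ y, if Even (mT N t y) then 1 else Real.exp (-(2 * h y))) +
          ∏ y, if Even (mT N t y + 1) then 1 else Real.exp (-(2 * h y))) / 2) := by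
  rw [tsum_mul_left, tsum_div_const,
    Summable.tsum_add ((Zm_summable N h _).of_norm) ((Zm_summable N h _).of_norm), Zm_tsum, Zm_tsum]

lemma boundA (hJ : ∀ x, 0 < J x) (hh : ∀ x, 0 ≤ h x) :
    (∏ _x : Fin N, ((1 : ℝ) / 2)) * ((1 + ∏ y, Real.exp (-(2 * h y))) / 2)
      ≤ (∑' p : (Fin N → ℕ) × (Fin (N + 1) → ℕ),
          if (∀ v : Fin (N + 1), (Odd (touch N p.1 v) ↔ Odd (p.2 v))) ∧
              Even (∑ x, p.2 x) then rcWeight N J h p else 0) := by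
  rw [calcA N J h hJ hh, tsum_congr (fun ng => ptA N J h ng), tsum_mul_left]
  apply mul_le_mul_of_nonneg_left ?_ (Finset.prod_nonneg fun _ _ => by norm_num)
  have hterm : ∀ t : Finset (Fin N), Summable fun ng =>
      (∏ x ∈ t, Real.exp (-(2 * J x))) *
        ((Zm N h (mT N t) ng + Zm N h (fun y => mT N t y + 1) ng) / 2) := fun t =>
    ((((Zm_summable N h _).of_norm.add (Zm_summable N h _).of_norm)).div_const 2).mul_left _
  rw [Summable.tsum_finsetSum (fun t _ => hterm t)]
  have hnn : ∀ t ∈ (Finset.univ : Finset (Fin N)).powerset,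
      0 ≤ ∑' ng, (∏ x ∈ t, Real.exp (-(2 * J x))) *
        ((Zm N h (mT N t) ng + Zm N h (fun y => mT N t y + 1) ng) / 2) := by
    intro t _
    rw [theta_val]
    apply mul_nonneg (Finset.prod_nonneg fun x _ => (Real.exp_pos _).le)
    apply div_nonneg _ (by norm_num)
    have hpr : ∀ m : Fin (N + 1) → ℕ,
        (0:ℝ) ≤ ∏ y, if Even (m y) then 1 else Real.exp (-(2 * h y)) := by
      intro m
      refine Finset.prod_nonneg fun y _ => ?_
      split
      · exact zero_le_one
      · exact (Real.exp_pos _).le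
    exact add_nonneg (hpr _) (hpr _)
  have hempty : (∑' ng, (∏ x ∈ (∅ : Finset (Fin N)), Real.exp (-(2 * J x))) *
      ((Zm N h (mT N ∅) ng + Zm N h (fun y => mT N ∅ y + 1) ng) / 2))
      = (1 + ∏ y, Real.exp (-(2 * h y))) / 2 := by
    rw [theta_val]
    have h0 : ∀ y : Fin (N + 1), mT N (∅ : Finset (Fin N)) y = 0 := by
      intro y; simp [mT]
    simp [h0]
  calc (1 + ∏ y, Real.exp (-(2 * h y))) / 2
      = ∑' ng, (∏ x ∈ (∅ : Finset (Fin N)), Real.exp (-(2 * J x))) *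
          ((Zm N h (mT N ∅) ng + Zm N h (fun y => mT N ∅ y + 1) ng) / 2) := hempty.symm
    _ ≤ _ := Finset.single_le_sum hnn (Finset.empty_mem_powerset _)

end MainA

lemma tanh_id (r : ℝ) : (1 + Real.tanh r) / 2 = 1 / (1 + Real.exp (-(2 * r))) := by
  rw [Real.tanh_eq_sinh_div_cosh, Real.sinh_eq, Real.cosh_eq]
  have h1 : (0:ℝ) < Real.exp r + Real.exp (-r) := by positivity
  have h2 : (0:ℝ) < 1 + Real.exp (-(2 * r)) := by positivity
  have h3 : Real.exp r * Real.exp (-r) = 1 := by rw [← Real.exp_add]; simp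
  have h4 : Real.exp (-(2 * r)) = Real.exp (-r) * Real.exp (-r) := by
    rw [← Real.exp_add]; ring_nf
  rw [h4]
  field_simp
  nlinarith [h3, Real.exp_pos r, Real.exp_pos (-r)]

theorem conditional_probability_lower_bound (N : ℕ) (J : Fin N → ℝ) (h : Fin (N + 1) → ℝ)
    (hJ : ∀ x, 0 < J x) (hh : ∀ x, 0 ≤ h x) :
    (∑' p : (Fin N → ℕ) × (Fin (N + 1) → ℕ),
          if (∀ v : Fin (N + 1), (Odd (touch N p.1 v) ↔ Odd (p.2 v))) ∧
              Even (∑ x, p.2 x) then rcWeight N J h p else 0) /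
        (∑' p : (Fin N → ℕ) × (Fin (N + 1) → ℕ),
          if Even (∑ x, p.2 x) then rcWeight N J h p else 0) /
      (∑' p : (Fin N → ℕ) × (Fin (N + 1) → ℕ),
          if (∀ x, Even (p.1 x)) then rcWeight N J h p else 0) ≥
    ∏ x : Fin N, (1 + Real.tanh (J x)) / 2 := by
  rw [ge_iff_le, calcB N J h, calcC N J h]
  have hu : ∀ x : Fin N, (0:ℝ) < Real.exp (-(2 * J x)) := fun x => Real.exp_pos _
  have hV : (0:ℝ) < ∏ y, Real.exp (-(2 * h y)) := Finset.prod_pos fun y _ => Real.exp_pos _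
  have hB : (0:ℝ) < (1 + ∏ y, Real.exp (-(2 * h y))) / 2 := by positivity
  have hC : (0:ℝ) < ∏ x, (1 + Real.exp (-(2 * J x))) / 2 :=
    Finset.prod_pos fun x _ => by positivity
  have hRHS : (∏ x : Fin N, (1 + Real.tanh (J x)) / 2)
      = ∏ x : Fin N, 1 / (1 + Real.exp (-(2 * J x))) :=
    Finset.prod_congr rfl fun x _ => tanh_id (J x)
  rw [div_div, hRHS, le_div_iff₀ (mul_pos hB hC)]
  have hprod : (∏ x : Fin N, 1 / (1 + Real.exp (-(2 * J x)))) *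
      (∏ x, (1 + Real.exp (-(2 * J x))) / 2) = ∏ _x : Fin N, ((1:ℝ)/2) := by
    rw [← Finset.prod_mul_distrib]
    refine Finset.prod_congr rfl fun x _ => ?_
    have h1 : (1:ℝ) + Real.exp (-(2 * J x)) ≠ 0 := by positivity
    field_simp
  have hstep : (∏ x : Fin N, 1 / (1 + Real.exp (-(2 * J x)))) *
      ((1 + ∏ y, Real.exp (-(2 * h y))) / 2 * ∏ x, (1 + Real.exp (-(2 * J x))) / 2)
      = (∏ _x : Fin N, ((1:ℝ)/2)) * ((1 + ∏ y, Real.exp (-(2 * h y))) / 2) := by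
    calc (∏ x : Fin N, 1 / (1 + Real.exp (-(2 * J x)))) *
        ((1 + ∏ y, Real.exp (-(2 * h y))) / 2 * ∏ x, (1 + Real.exp (-(2 * J x))) / 2)
        = ((∏ x : Fin N, 1 / (1 + Real.exp (-(2 * J x)))) *
            (∏ x, (1 + Real.exp (-(2 * J x))) / 2)) *
            ((1 + ∏ y, Real.exp (-(2 * h y))) / 2) := by ring
      _ = (∏ _x : Fin N, ((1:ℝ)/2)) * ((1 + ∏ y, Real.exp (-(2 * h y))) / 2) := by
          rw [hprod]
  rw [hstep]
  exact boundA N J h hJ hh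
end

section
/- For the one-dimensional Ising model on {0,…,N} with nonnegative couplings J_x > 0 and nonnegative external fields h_x ≥ 0, the endpoint covariance satisfies Cov(σ_0, σ_N) ≤ ( ∏_{x=0}^{N-1} 4·tanh(J_x)/(1+tanh(J_x))² ) · 1/cosh²( Σ_{x=0}^N h_x ). -/
open Finset

open Real

/-- The spin value of a Boolean: `true ↦ +1`, `false ↦ -1`. -/
noncomputable def sp (b : Bool) : ℝ := if b then 1 else -1

lemma sp_true : sp true = 1 := rfl
lemma sp_false : sp false = -1 := rfl

noncomputable def cC (j p : ℝ) : ℝ := 2 * Real.sqrt (Real.cosh (j+p) * Real.cosh (j-p))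
noncomputable def dD (j p : ℝ) : ℝ := Real.log (Real.cosh (j+p) / Real.cosh (j-p)) / 2
noncomputable def aA (j p : ℝ) : ℝ := (Real.tanh (j+p) + Real.tanh (p-j)) / 2
noncomputable def bB (j p : ℝ) : ℝ := (Real.tanh (j+p) - Real.tanh (p-j)) / 2

lemma sqrt_exp_log_half (a b : ℝ) (ha : 0 < a) (hb : 0 < b) :
    2 * Real.sqrt (a * b) * Real.exp (Real.log (a / b) / 2) = 2 * a := by
  rw [Real.exp_half, Real.exp_log (by positivity), mul_assoc, ← Real.sqrt_mul (by positivity)]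
  have : a * b * (a / b) = a ^ 2 := by field_simp
  rw [this, Real.sqrt_sq ha.le]

lemma ceδ (j p : ℝ) (y : Bool) :
    cC j p * Real.exp (dD j p * sp y) = 2 * Real.cosh (j * sp y + p) := by
  have h1 : 0 < Real.cosh (j + p) := Real.cosh_pos _
  have h2 : 0 < Real.cosh (j - p) := Real.cosh_pos _
  cases y with
  | true =>
      rw [sp_true, mul_one, mul_one]
      exact sqrt_exp_log_half _ _ h1 h2
  | false =>
      rw [sp_false, mul_neg_one, mul_neg_one]
      unfold cC dD
      have e1 : -j + p = -(j - p) := by ring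
      have e2 : Real.cosh (j + p) * Real.cosh (j - p) = Real.cosh (j - p) * Real.cosh (j + p) := by ring
      have e3 : -(Real.log (Real.cosh (j + p) / Real.cosh (j - p)) / 2)
          = Real.log (Real.cosh (j - p) / Real.cosh (j + p)) / 2 := by
        rw [Real.log_div h1.ne' h2.ne', Real.log_div h2.ne' h1.ne']; ring
      rw [e1, Real.cosh_neg, e2, e3]
      exact sqrt_exp_log_half _ _ h2 h1

lemma aAbB (j p : ℝ) (y : Bool) : aA j p + bB j p * sp y = Real.tanh (j * sp y + p) := by
  cases y with
  | true => rw [sp_true, mul_one, mul_one]; unfold aA bB; ring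
  | false =>
      rw [sp_false, mul_neg_one, mul_neg_one]
      have : -j + p = p - j := by ring
      rw [this]; unfold aA bB; ring

lemma sinh_fact (j p : ℝ) (y : Bool) :
    (aA j p + bB j p * sp y) * (cC j p * Real.exp (dD j p * sp y))
      = 2 * Real.sinh (j * sp y + p) := by
  rw [aAbB, ceδ, Real.tanh_eq_sinh_div_cosh]
  field_simp [(Real.cosh_pos _).ne']


/-- Hamiltonian of the 1D Ising chain on `{0, …, N}` with couplings `J` and fields `h`. -/
noncomputable def ham (N : ℕ) (J : Fin N → ℝ) (h : Fin (N + 1) → ℝ)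
    (σ : Fin (N + 1) → Bool) : ℝ :=
  -(∑ x : Fin N, J x * sp (σ x.castSucc) * sp (σ x.succ)) - ∑ x : Fin (N + 1), h x * sp (σ x)

/-- Partition function of the 1D Ising chain. -/
noncomputable def part (N : ℕ) (J : Fin N → ℝ) (h : Fin (N + 1) → ℝ) : ℝ :=
  ∑ σ : Fin (N + 1) → Bool, Real.exp (-(ham N J h σ))

/-- Gibbs probability of a configuration. -/
noncomputable def gibbs (N : ℕ) (J : Fin N → ℝ) (h : Fin (N + 1) → ℝ)
    (σ : Fin (N + 1) → Bool) : ℝ :=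
  Real.exp (-(ham N J h σ)) / part N J h

/-- Gibbs expectation of an observable. -/
noncomputable def gibbsE (N : ℕ) (J : Fin N → ℝ) (h : Fin (N + 1) → ℝ)
    (f : (Fin (N + 1) → Bool) → ℝ) : ℝ :=
  ∑ σ : Fin (N + 1) → Bool, gibbs N J h σ * f σ

/-- Covariance of the endpoint spins `σ_0` and `σ_N` under the Gibbs measure. -/
noncomputable def covEnds (N : ℕ) (J : Fin N → ℝ) (h : Fin (N + 1) → ℝ) : ℝ :=
  gibbsE N J h (fun σ => sp (σ 0) * sp (σ (Fin.last N))) -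
    gibbsE N J h (fun σ => sp (σ 0)) * gibbsE N J h (fun σ => sp (σ (Fin.last N)))

noncomputable def wsum (N : ℕ) (J : Fin N → ℝ) (h : Fin (N + 1) → ℝ)
    (f : (Fin (N + 1) → Bool) → ℝ) : ℝ :=
  ∑ σ : Fin (N + 1) → Bool, Real.exp (-(ham N J h σ)) * f σ

lemma ham_cons (N : ℕ) (J : Fin (N+1) → ℝ) (h : Fin (N+2) → ℝ) (s : Bool)
    (τ : Fin (N+1) → Bool) :
    ham (N+1) J h (Fin.cons s τ) =
      -(J 0 * sp s * sp (τ 0)) - h 0 * sp s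
        + ham N (fun x => J x.succ) (fun x => h x.succ) τ := by
  unfold ham
  simp only [Fin.sum_univ_succ, Fin.castSucc_zero, Fin.cons_zero, Fin.cons_succ,
    ← Fin.succ_castSucc]
  ring

lemma ham_shift (N : ℕ) (J : Fin N → ℝ) (h : Fin (N+1) → ℝ) (δ : ℝ)
    (τ : Fin (N+1) → Bool) :
    ham N J (fun i => h i + (if i = 0 then δ else 0)) τ
      = ham N J h τ - δ * sp (τ 0) := by
  unfold ham
  have : ∑ x : Fin (N+1), (h x + (if x = 0 then δ else 0)) * sp (τ x)
      = ∑ x : Fin (N+1), h x * sp (τ x) + δ * sp (τ 0) := by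
    rw [Finset.sum_congr rfl (fun x _ => add_mul (h x) _ (sp (τ x))), Finset.sum_add_distrib]
    congr 1
    rw [Finset.sum_congr rfl (fun x _ => ite_mul (x = 0) δ 0 (sp (τ x)))]
    simp [Finset.sum_ite_eq' Finset.univ (0 : Fin (N+1))]
  rw [this]; ring

lemma sum_cons_decomp (N : ℕ) (F : (Fin (N+2) → Bool) → ℝ) :
    ∑ σ : Fin (N+2) → Bool, F σ
      = ∑ τ : Fin (N+1) → Bool, ∑ s : Bool, F (Fin.cons s τ) := by
  rw [← (Fin.consEquiv (fun _ : Fin (N+2) => Bool)).sum_comp F]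
  rw [Fintype.sum_prod_type_right]
  rfl


lemma wsum_cons (N : ℕ) (J : Fin (N+1) → ℝ) (h : Fin (N+2) → ℝ)
    (φ : Bool → ℝ) (g : (Fin (N+1) → Bool) → ℝ) (α β : ℝ)
    (H : ∀ y : Bool,
      φ true * Real.exp (J 0 * sp y + h 0) + φ false * Real.exp (-(J 0 * sp y) - h 0)
        = (α + β * sp y) * (cC (J 0) (h 0) * Real.exp (dD (J 0) (h 0) * sp y))) :
    wsum (N+1) J h (fun σ => φ (σ 0) * g (fun i => σ i.succ))
      = cC (J 0) (h 0) *
        wsum N (fun x => J x.succ)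
          (fun i => h i.succ + (if i = 0 then dD (J 0) (h 0) else 0))
          (fun τ => (α + β * sp (τ 0)) * g τ) := by
  unfold wsum
  rw [sum_cons_decomp, Finset.mul_sum]
  apply Finset.sum_congr rfl
  intro τ _
  rw [Fintype.sum_bool]
  simp only [ham_cons, Fin.cons_zero, Fin.cons_succ, ham_shift]
  have key := H (τ 0)
  rw [sp_true, sp_false] at *
  have e1 : ∀ (A B R : ℝ), Real.exp (-((-A) - B + R)) = Real.exp (A + B) * Real.exp (-R) := by
    intros A B R
    rw [← Real.exp_add]; ring_nf
  set R := ham N (fun x => J x.succ) (fun x => h x.succ) τ with hR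
  have E1 : Real.exp (-(-(J 0 * 1 * sp (τ 0)) - h 0 * 1 + R))
      = Real.exp (J 0 * sp (τ 0) + h 0) * Real.exp (-R) := by
    rw [← Real.exp_add]; exact congrArg Real.exp (by ring)
  have E2 : Real.exp (-(-(J 0 * -1 * sp (τ 0)) - h 0 * -1 + R))
      = Real.exp (-(J 0 * sp (τ 0)) - h 0) * Real.exp (-R) := by
    rw [← Real.exp_add]; exact congrArg Real.exp (by ring)
  have E3 : Real.exp (-(R - dD (J 0) (h 0) * sp (τ 0)))
      = Real.exp (dD (J 0) (h 0) * sp (τ 0)) * Real.exp (-R) := by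
    rw [← Real.exp_add]; exact congrArg Real.exp (by ring)
  rw [E1, E2, E3]
  linear_combination Real.exp (-R) * g τ * key


lemma Hsum_one (j p : ℝ) (y : Bool) :
    Real.exp (j * sp y + p) + Real.exp (-(j * sp y) - p)
      = cC j p * Real.exp (dD j p * sp y) := by
  rw [ceδ, Real.cosh_eq, show -(j * sp y) - p = -(j * sp y + p) from by ring]
  ring

lemma Hsum_sp (j p : ℝ) (y : Bool) :
    Real.exp (j * sp y + p) - Real.exp (-(j * sp y) - p)
      = (aA j p + bB j p * sp y) * (cC j p * Real.exp (dD j p * sp y)) := by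
  rw [sinh_fact, Real.sinh_eq, show -(j * sp y) - p = -(j * sp y + p) from by ring]
  ring

lemma wsum_affine (N : ℕ) (J : Fin N → ℝ) (h : Fin (N+1) → ℝ) (α β : ℝ)
    (g : (Fin (N+1) → Bool) → ℝ) :
    wsum N J h (fun τ => (α + β * sp (τ 0)) * g τ)
      = α * wsum N J h g + β * wsum N J h (fun τ => sp (τ 0) * g τ) := by
  unfold wsum
  rw [Finset.mul_sum, Finset.mul_sum, ← Finset.sum_add_distrib]
  exact Finset.sum_congr rfl fun τ _ => by ring

lemma part_eq_wsum (N : ℕ) (J : Fin N → ℝ) (h : Fin (N+1) → ℝ) :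
    part N J h = wsum N J h (fun _ => 1) := by
  unfold part wsum; simp

lemma wsum_one_pos (N : ℕ) (J : Fin N → ℝ) (h : Fin (N+1) → ℝ) :
    0 < wsum N J h (fun _ => 1) := by
  unfold wsum
  apply Finset.sum_pos (fun σ _ => by positivity) univ_nonempty

lemma cC_pos (j p : ℝ) : 0 < cC j p :=
  mul_pos two_pos (Real.sqrt_pos.mpr (mul_pos (Real.cosh_pos _) (Real.cosh_pos _)))

lemma gibbsE_eq (N : ℕ) (J : Fin N → ℝ) (h : Fin (N+1) → ℝ)
    (f : (Fin (N+1) → Bool) → ℝ) :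
    gibbsE N J h f = wsum N J h f / part N J h := by
  unfold gibbsE gibbs wsum
  simp only [div_mul_eq_mul_div]
  rw [← Finset.sum_div]

lemma covEnds_rec (N : ℕ) (J : Fin (N+1) → ℝ) (h : Fin (N+2) → ℝ) :
    covEnds (N+1) J h
      = bB (J 0) (h 0) *
        covEnds N (fun x => J x.succ)
          (fun i => h i.succ + (if i = 0 then dD (J 0) (h 0) else 0)) := by
  have H1 : ∀ y : Bool,
      (fun _ : Bool => (1:ℝ)) true * Real.exp (J 0 * sp y + h 0)
        + (fun _ : Bool => (1:ℝ)) false * Real.exp (-(J 0 * sp y) - h 0)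
        = ((1:ℝ) + 0 * sp y) * (cC (J 0) (h 0) * Real.exp (dD (J 0) (h 0) * sp y)) := by
    intro y
    simp only [one_mul, zero_mul, add_zero]
    exact Hsum_one (J 0) (h 0) y
  have H2 : ∀ y : Bool,
      sp true * Real.exp (J 0 * sp y + h 0) + sp false * Real.exp (-(J 0 * sp y) - h 0)
        = (aA (J 0) (h 0) + bB (J 0) (h 0) * sp y)
            * (cC (J 0) (h 0) * Real.exp (dD (J 0) (h 0) * sp y)) := by
    intro y
    rw [sp_true, sp_false, one_mul, neg_one_mul, ← sub_eq_add_neg]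
    exact Hsum_sp (J 0) (h 0) y
  have WA := wsum_cons N J h (fun _ => 1) (fun _ => 1) 1 0 H1
  have WB := wsum_cons N J h sp (fun _ => 1) (aA (J 0) (h 0)) (bB (J 0) (h 0)) H2
  have WC := wsum_cons N J h (fun _ => 1) (fun τ => sp (τ (Fin.last N))) 1 0 H1
  have WD := wsum_cons N J h sp (fun τ => sp (τ (Fin.last N))) (aA (J 0) (h 0)) (bB (J 0) (h 0)) H2
  rw [wsum_affine] at WA WB WC WD
  simp only [mul_one, one_mul, zero_mul, add_zero, mul_zero] at WA WB WC WD
  simp only [Fin.succ_last] at WC WD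
  unfold covEnds
  rw [gibbsE_eq, gibbsE_eq, gibbsE_eq, gibbsE_eq, gibbsE_eq, gibbsE_eq,
      part_eq_wsum, part_eq_wsum, WA, WB, WC, WD]
  have hc : cC (J 0) (h 0) ≠ 0 := (cC_pos _ _).ne'
  have hA : wsum N (fun x => J x.succ)
      (fun i => h i.succ + (if i = 0 then dD (J 0) (h 0) else 0)) (fun _ => 1) ≠ 0 :=
    (wsum_one_pos _ _ _).ne'
  field_simp
  ring


lemma one_le_exp_of_nonneg {x : ℝ} (hx : 0 ≤ x) : 1 ≤ Real.exp x := by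
  rw [← Real.exp_zero]; exact Real.exp_le_exp.mpr hx

lemma tanh2 (z : ℝ) : Real.tanh z = (Real.exp z ^ 2 - 1)/(Real.exp z ^ 2 + 1) := by
  have h1 : Real.exp z ^ 2 + 1 ≠ 0 := by positivity
  rw [Real.tanh_eq_sinh_div_cosh, Real.sinh_eq, Real.cosh_eq,
      div_eq_div_iff (by positivity) h1, Real.exp_neg]
  field_simp [Real.exp_ne_zero]

lemma exp_two_dD (j p : ℝ) :
    Real.exp (2 * dD j p)
      = (Real.exp j ^ 2 * Real.exp p ^ 2 + 1) / (Real.exp j ^ 2 + Real.exp p ^ 2) := by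
  have e1 : 2 * dD j p = Real.log (Real.cosh (j+p) / Real.cosh (j-p)) := by
    unfold dD; ring
  have h1 : (0:ℝ) < Real.cosh (j - p) := Real.cosh_pos _
  have h2 : (0:ℝ) < Real.cosh (j + p) := Real.cosh_pos _
  rw [e1, Real.exp_log (by positivity), Real.cosh_eq, Real.cosh_eq,
      div_eq_div_iff (by positivity) (by positivity),
      Real.exp_add, Real.exp_neg, Real.exp_add, Real.exp_sub, Real.exp_neg, Real.exp_sub]
  field_simp [Real.exp_ne_zero]

lemma bB_closed (j p : ℝ) :
    bB j p = Real.exp p ^ 2 * (Real.exp j ^ 4 - 1)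
      / ((Real.exp j ^ 2 * Real.exp p ^ 2 + 1) * (Real.exp j ^ 2 + Real.exp p ^ 2)) := by
  have hx := Real.exp_pos j
  have hy := Real.exp_pos p
  have d1 : ((Real.exp j * Real.exp p) ^ 2 + 1) ≠ 0 := by positivity
  have d2 : ((Real.exp p / Real.exp j) ^ 2 + 1) ≠ 0 := by positivity
  unfold bB
  rw [tanh2 (j+p), tanh2 (p-j), Real.exp_add, Real.exp_sub]
  field_simp
  ring

lemma bB_nonneg (j p : ℝ) (hj : 0 ≤ j) : 0 ≤ bB j p := by
  rw [bB_closed]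
  have h1 : 1 ≤ Real.exp j := one_le_exp_of_nonneg hj
  have h4 : 1 ≤ Real.exp j ^ 4 := one_le_pow₀ h1
  have := Real.exp_pos p
  have := Real.exp_pos j
  apply div_nonneg (by nlinarith) (by positivity)

lemma dD_le (j p : ℝ) (hp : 0 ≤ p) : dD j p ≤ p := by
  have hy : 1 ≤ Real.exp p := one_le_exp_of_nonneg hp
  have hx := Real.exp_pos j
  have h2 : Real.exp (2 * dD j p) ≤ Real.exp (2 * p) := by
    rw [exp_two_dD]
    have e2 : Real.exp (2 * p) = Real.exp p ^ 2 := by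
      rw [two_mul, Real.exp_add, sq]
    rw [e2, div_le_iff₀ (by positivity)]
    have h4 : 1 ≤ Real.exp p ^ 4 := one_le_pow₀ hy
    nlinarith
  have := Real.exp_le_exp.mp h2
  linarith

lemma dD_nonneg (j p : ℝ) (hj : 0 ≤ j) (hp : 0 ≤ p) : 0 ≤ dD j p := by
  have hx : 1 ≤ Real.exp j := one_le_exp_of_nonneg hj
  have hy : 1 ≤ Real.exp p := one_le_exp_of_nonneg hp
  have h2 : Real.exp (2 * 0) ≤ Real.exp (2 * dD j p) := by
    rw [exp_two_dD, mul_zero, Real.exp_zero, le_div_iff₀ (by positivity)]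
    have h2x : 1 ≤ Real.exp j ^ 2 := one_le_pow₀ hx
    have h2y : 1 ≤ Real.exp p ^ 2 := one_le_pow₀ hy
    nlinarith [mul_nonneg (sub_nonneg.2 h2x) (sub_nonneg.2 h2y)]
  have := Real.exp_le_exp.mp h2
  linarith

lemma scalar_main (j p : ℝ) (hj : 0 < j) (hp : 0 ≤ p) :
    bB j p ≤ (4 * Real.tanh j / (1 + Real.tanh j) ^ 2) * Real.exp (2 * dD j p - 2 * p) := by
  have hx : 1 < Real.exp j := by
    rw [← Real.exp_zero]; exact Real.exp_lt_exp.mpr hj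
  have hy : 1 ≤ Real.exp p := one_le_exp_of_nonneg hp
  have hx0 := Real.exp_pos j
  have hy0 := Real.exp_pos p
  set x := Real.exp j
  set y := Real.exp p
  -- closed form for the tanh factor
  have L2 : 4 * Real.tanh j / (1 + Real.tanh j) ^ 2 = (x ^ 4 - 1) / x ^ 4 := by
    rw [tanh2 j]
    have d1 : x ^ 2 + 1 ≠ 0 := by positivity
    have d2 : (1 + (x ^ 2 - 1) / (x ^ 2 + 1)) ^ 2 ≠ 0 := by
      have : 1 + (x ^ 2 - 1) / (x ^ 2 + 1) = 2 * x ^ 2 / (x ^ 2 + 1) := by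
        field_simp
        ring
      rw [this]; positivity
    field_simp
    ring
  -- closed form for the exponential factor
  have L3 : Real.exp (2 * dD j p - 2 * p) = (x ^ 2 * y ^ 2 + 1) / ((x ^ 2 + y ^ 2) * y ^ 2) := by
    rw [Real.exp_sub, exp_two_dD, show (2:ℝ) * p = p + p from by ring, Real.exp_add, div_div]
    congr 1
    ring
  rw [bB_closed, L2, L3]
  rw [div_mul_div_comm, div_le_div_iff₀ (by positivity) (by positivity)]
  have key : x ^ 2 * y ^ 2 * (x ^ 2 * y ^ 2) ≤ (x ^ 2 * y ^ 2 + 1) ^ 2 := by nlinarith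
  have h4 : (0:ℝ) ≤ (x ^ 4 - 1) * (x ^ 2 + y ^ 2) := by
    have hx4 : 1 ≤ x ^ 4 := one_le_pow₀ hx.le
    exact mul_nonneg (by linarith) (by positivity)
  nlinarith [mul_le_mul_of_nonneg_left key h4]

lemma cosh_shift (j p S : ℝ) (hp : 0 ≤ p) :
    Real.cosh (p + S) ≤ Real.exp (p - dD j p) * Real.cosh (S + dD j p) := by
  have hd := dD_le j p hp
  rw [Real.cosh_eq, Real.cosh_eq]
  have e1 : Real.exp (p - dD j p) * Real.exp (S + dD j p) = Real.exp (p + S) := by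
    rw [← Real.exp_add]; exact congrArg Real.exp (by ring)
  have e2 : Real.exp (p - dD j p) * Real.exp (-(S + dD j p))
      = Real.exp (p - 2 * dD j p - S) := by
    rw [← Real.exp_add]; exact congrArg Real.exp (by ring)
  have e3 : Real.exp (-(p + S)) ≤ Real.exp (p - 2 * dD j p - S) :=
    Real.exp_le_exp.mpr (by linarith)
  calc (Real.exp (p + S) + Real.exp (-(p + S))) / 2
      ≤ (Real.exp (p + S) + Real.exp (p - 2 * dD j p - S)) / 2 := by linarith
    _ = Real.exp (p - dD j p) * ((Real.exp (S + dD j p) + Real.exp (-(S + dD j p))) / 2) := by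
        rw [← e1, ← e2]; ring


lemma tanh_pos' {j : ℝ} (hj : 0 < j) : 0 < Real.tanh j := by
  rw [tanh2]
  have : 1 < Real.exp j := by rw [← Real.exp_zero]; exact Real.exp_lt_exp.mpr hj
  have h2 : 1 < Real.exp j ^ 2 := by nlinarith
  have h3 : (0:ℝ) < Real.exp j ^ 2 + 1 := by positivity
  exact div_pos (by linarith) h3

lemma sum_fin1 (f : (Fin 1 → Bool) → ℝ) :
    ∑ σ : Fin 1 → Bool, f σ = f (fun _ => true) + f (fun _ => false) := by
  rw [← (Equiv.funUnique (Fin 1) Bool).symm.sum_comp f, Fintype.sum_bool]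
  rfl

lemma covEnds_zero (J : Fin 0 → ℝ) (h : Fin 1 → ℝ) :
    covEnds 0 J h = 1 / Real.cosh (h 0) ^ 2 := by
  unfold covEnds
  rw [gibbsE_eq, gibbsE_eq, gibbsE_eq, part_eq_wsum]
  unfold wsum ham
  rw [sum_fin1, sum_fin1, sum_fin1, sum_fin1]
  simp only [Finset.univ_eq_empty, Finset.sum_empty, Fin.sum_univ_succ, Fin.sum_univ_zero,
    sp_true, sp_false, neg_zero, zero_sub, neg_neg, mul_one, mul_neg_one, Fin.last, add_zero]
  rw [Real.cosh_eq]
  have hne : Real.exp (h 0) + Real.exp (-h 0) ≠ 0 := by positivity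
  have hne2 : Real.exp (h 0) * Real.exp (-h 0) = 1 := by
    rw [← Real.exp_add]; simp
  field_simp
  nlinarith [hne2, Real.exp_pos (h 0), Real.exp_pos (-h 0)]

theorem covariance_upper_bound_ferromagnetic (N : ℕ) (J : Fin N → ℝ)
    (h : Fin (N + 1) → ℝ) (hJ : ∀ x, 0 < J x) (hh : ∀ x, 0 ≤ h x) :
    covEnds N J h ≤
      (∏ x : Fin N, 4 * Real.tanh (J x) / (1 + Real.tanh (J x)) ^ 2) *
        (1 / Real.cosh (∑ x, h x) ^ 2) := by
  induction N with
  | zero =>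
      rw [covEnds_zero]
      simp [Fin.sum_univ_succ]
  | succ n ih =>
      rw [covEnds_rec]
      set j := J 0 with hj0
      set p := h 0 with hp0
      have hjp : 0 < j := hJ 0
      have hpp : 0 ≤ p := hh 0
      set δ := dD j p with hδ
      have hδ0 : 0 ≤ δ := dD_nonneg j p hjp.le hpp
      have hδp : δ ≤ p := dD_le j p hpp
      have IH : covEnds n (fun x => J x.succ)
            (fun i => h i.succ + (if i = 0 then δ else 0))
          ≤ (∏ x : Fin n, 4 * Real.tanh (J x.succ) / (1 + Real.tanh (J x.succ)) ^ 2) *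
            (1 / Real.cosh (∑ x : Fin (n+1), (h x.succ + (if x = 0 then δ else 0))) ^ 2) :=
        ih (fun x => J x.succ) (fun i => h i.succ + (if i = 0 then δ else 0))
          (fun x => hJ x.succ)
          (fun x => add_nonneg (hh x.succ) (by split <;> simp [hδ0]))
      have hb : 0 ≤ bB j p := bB_nonneg j p hjp.le
      set S := ∑ x : Fin (n+1), h x.succ with hS
      have hsum' : ∑ x : Fin (n+1), (h x.succ + (if x = 0 then δ else 0)) = S + δ := by
        rw [Finset.sum_add_distrib]
        congr 1
        simp
      rw [hsum'] at IH
      have hsum : ∑ x : Fin (n+2), h x = p + S := by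
        rw [Fin.sum_univ_succ]
      have hprod : (∏ x : Fin (n+1), 4 * Real.tanh (J x) / (1 + Real.tanh (J x)) ^ 2)
          = (4 * Real.tanh j / (1 + Real.tanh j) ^ 2) *
            ∏ x : Fin n, 4 * Real.tanh (J x.succ) / (1 + Real.tanh (J x.succ)) ^ 2 := by
        rw [Fin.prod_univ_succ]
      rw [hsum, hprod]
      set F0 := 4 * Real.tanh j / (1 + Real.tanh j) ^ 2 with hF0
      set P' := ∏ x : Fin n, 4 * Real.tanh (J x.succ) / (1 + Real.tanh (J x.succ)) ^ 2 with hP'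
      have hF0nn : 0 ≤ F0 := by
        rw [hF0]
        have := tanh_pos' hjp
        positivity
      have hP'nn : 0 ≤ P' := by
        rw [hP']
        apply Finset.prod_nonneg
        intro x _
        have := tanh_pos' (hJ x.succ)
        positivity
      have hcosh1 : (0:ℝ) < Real.cosh (S + δ) ^ 2 := by positivity
      have hcosh2 : (0:ℝ) < Real.cosh (p + S) ^ 2 := by positivity
      have step1 : bB j p * covEnds n (fun x => J x.succ)
            (fun i => h i.succ + (if i = 0 then δ else 0))
          ≤ bB j p * (P' * (1 / Real.cosh (S + δ) ^ 2)) :=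
        mul_le_mul_of_nonneg_left IH hb
      have sm := scalar_main j p hjp hpp
      rw [← hF0] at sm
      have step2 : bB j p * (P' * (1 / Real.cosh (S + δ) ^ 2))
          ≤ (F0 * Real.exp (2 * δ - 2 * p)) * (P' * (1 / Real.cosh (S + δ) ^ 2)) :=
        mul_le_mul_of_nonneg_right sm
          (mul_nonneg hP'nn (by positivity))
      have e4 : Real.exp (2 * δ - 2 * p) * Real.exp (p - δ) ^ 2 = 1 := by
        rw [sq, ← Real.exp_add, ← Real.exp_add,
            show 2 * δ - 2 * p + (p - δ + (p - δ)) = 0 from by ring, Real.exp_zero]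
      have c1 : Real.cosh (p + S) ^ 2 ≤ Real.exp (p - δ) ^ 2 * Real.cosh (S + δ) ^ 2 := by
        have hcs := cosh_shift j p S hpp
        have := Real.cosh_pos (p + S)
        have := Real.exp_pos (p - δ)
        have := Real.cosh_pos (S + δ)
        nlinarith
      have h5 : Real.exp (2 * δ - 2 * p) * Real.cosh (p + S) ^ 2
          ≤ Real.cosh (S + δ) ^ 2 := by
        calc Real.exp (2 * δ - 2 * p) * Real.cosh (p + S) ^ 2
            ≤ Real.exp (2 * δ - 2 * p) * (Real.exp (p - δ) ^ 2 * Real.cosh (S + δ) ^ 2) :=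
              mul_le_mul_of_nonneg_left c1 (Real.exp_pos _).le
          _ = (Real.exp (2 * δ - 2 * p) * Real.exp (p - δ) ^ 2) * Real.cosh (S + δ) ^ 2 := by
              ring
          _ = Real.cosh (S + δ) ^ 2 := by rw [e4, one_mul]
      have h6 : Real.exp (2 * δ - 2 * p) / Real.cosh (S + δ) ^ 2
          ≤ 1 / Real.cosh (p + S) ^ 2 := by
        rw [div_le_div_iff₀ hcosh1 hcosh2]
        linarith
      have step3 : (F0 * Real.exp (2 * δ - 2 * p)) * (P' * (1 / Real.cosh (S + δ) ^ 2))
          ≤ F0 * P' * (1 / Real.cosh (p + S) ^ 2) := by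
        calc (F0 * Real.exp (2 * δ - 2 * p)) * (P' * (1 / Real.cosh (S + δ) ^ 2))
            = (F0 * P') * (Real.exp (2 * δ - 2 * p) / Real.cosh (S + δ) ^ 2) := by ring
          _ ≤ (F0 * P') * (1 / Real.cosh (p + S) ^ 2) :=
              mul_le_mul_of_nonneg_left h6 (mul_nonneg hF0nn hP'nn)
          _ = F0 * P' * (1 / Real.cosh (p + S) ^ 2) := by ring
      exact le_trans step1 (le_trans step2 step3)
end

section
/- For an Ising model on a finite graph with possibly signed couplings J_e and possibly signed external fields h_x, and any two vertices i, j: |Cov_{J,h}(σ_i, σ_j)| ≤ Cov_{|J|,|h|}(σ_i, σ_j) · ( Z_{|J|,|h|} / Z_{J,h} )², where the subscripts indicate the model with the absolute values of all interactions, and Z denotes the corresponding partition functions. -/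
open Finset

variable {V : Type*} [Fintype V] [DecidableEq V]

/-- Partition function of the Ising model on a finite graph with edge set `E`,
couplings `J` and external fields `h`. -/
noncomputable def gpart (E : Finset (V × V)) (J : V × V → ℝ) (h : V → ℝ) : ℝ :=
  ∑ σ : V → Bool,
    Real.exp ((∑ e ∈ E, J e * sp (σ e.1) * sp (σ e.2)) + ∑ x : V, h x * sp (σ x))

/-- Gibbs expectation of an observable for the Ising model on a finite graph. -/
noncomputable def gexp (E : Finset (V × V)) (J : V × V → ℝ) (h : V → ℝ)
    (f : (V → Bool) → ℝ) : ℝ :=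
  (∑ σ : V → Bool,
      Real.exp ((∑ e ∈ E, J e * sp (σ e.1) * sp (σ e.2)) + ∑ x : V, h x * sp (σ x)) * f σ) /
    gpart E J h

/-- Covariance of the spins at `i` and `j` under the Gibbs measure. -/
noncomputable def gcov (E : Finset (V × V)) (J : V × V → ℝ) (h : V → ℝ) (i j : V) : ℝ :=
  gexp E J h (fun σ => sp (σ i) * sp (σ j)) -
    gexp E J h (fun σ => sp (σ i)) * gexp E J h (fun σ => sp (σ j))

/- ============ auxiliary material ============ -/

open symmDiff

lemma sp_sq (b : Bool) : sp b * sp b = 1 := by cases b <;> simp [sp]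

lemma sp_beq (a b : Bool) : sp (a == b) = sp a * sp b := by
  cases a <;> cases b <;> simp [sp]

lemma one_add_sp_nonneg (a : Bool) : 0 ≤ 1 + sp a := by cases a <;> norm_num [sp]
lemma one_sub_sp_nonneg (a : Bool) : 0 ≤ 1 - sp a := by cases a <;> norm_num [sp]
lemma one_add_sp_mul_sp_nonneg (a b : Bool) : 0 ≤ 1 + sp a * sp b := by
  cases a <;> cases b <;> norm_num [sp]

/-- spin monomial indexed by a finite set of vertices -/
noncomputable def chi (A : Finset V) (σ : V → Bool) : ℝ := ∏ x ∈ A, sp (σ x)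

set_option linter.unusedSectionVars false

lemma sp_not (b : Bool) : sp (!b) = - sp b := by cases b <;> simp [sp]

lemma chi_singleton (a : V) (σ : V → Bool) : chi {a} σ = sp (σ a) := by
  rw [chi, Finset.prod_singleton]

lemma chi_self (S : Finset V) (σ : V → Bool) : chi S σ * chi S σ = 1 := by
  rw [chi, ← Finset.prod_mul_distrib]
  exact Finset.prod_eq_one (fun x _ => sp_sq _)

lemma chi_mul (A B : Finset V) (σ : V → Bool) :
    chi A σ * chi B σ = chi (A ∆ B) σ := by
  have hA : chi A σ = chi (A \ B) σ * chi (A ∩ B) σ := by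
    rw [chi, chi, chi, ← Finset.prod_union (Finset.disjoint_sdiff_inter A B),
      Finset.sdiff_union_inter]
  have hB : chi B σ = chi (B \ A) σ * chi (B ∩ A) σ := by
    rw [chi, chi, chi, ← Finset.prod_union (Finset.disjoint_sdiff_inter B A),
      Finset.sdiff_union_inter]
  have hD : chi (A ∆ B) σ = chi (A \ B) σ * chi (B \ A) σ := by
    rw [chi, chi, chi, ← Finset.prod_union disjoint_sdiff_sdiff]
    congr 1
  have hint : chi (A ∩ B) σ * chi (B ∩ A) σ = 1 := by
    rw [Finset.inter_comm]; exact chi_self _ _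
  rw [hA, hB, hD]
  calc chi (A \ B) σ * chi (A ∩ B) σ * (chi (B \ A) σ * chi (B ∩ A) σ)
      = chi (A \ B) σ * chi (B \ A) σ * (chi (A ∩ B) σ * chi (B ∩ A) σ) := by ring
    _ = chi (A \ B) σ * chi (B \ A) σ := by rw [hint, mul_one]

lemma chi_pm (A : Finset V) (σ : V → Bool) : chi A σ = 1 ∨ chi A σ = -1 := by
  refine Finset.prod_induction _ (fun r => r = 1 ∨ r = -1) ?_ (Or.inl rfl) ?_
  · rintro a b (rfl | rfl) (rfl | rfl) <;> norm_num
  · intro x _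
    cases σ x
    · exact Or.inr (by simp [sp])
    · exact Or.inl (by simp [sp])

lemma sum_chi_nonneg (A : Finset V) : 0 ≤ ∑ σ : V → Bool, chi A σ := by
  rcases A.eq_empty_or_nonempty with rfl | ⟨x, hx⟩
  · simp [chi]
  · have hinv : Function.Involutive (fun (σ : V → Bool) => Function.update σ x (!σ x)) := by
      intro σ; funext y
      rcases eq_or_ne y x with rfl | hy
      · simp
      · simp [Function.update_of_ne hy]
    have hflip : ∀ σ : V → Bool, chi A (Function.update σ x (!σ x)) = - chi A σ := by
      intro σ
      rw [chi, chi, ← Finset.mul_prod_erase A _ hx, ← Finset.mul_prod_erase A _ hx]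
      have h1 : ∀ y ∈ A.erase x, sp ((Function.update σ x (!σ x)) y) = sp (σ y) := by
        intro y hy
        rw [Function.update_of_ne (Finset.ne_of_mem_erase hy)]
      rw [Finset.prod_congr rfl h1, Function.update_self, sp_not]
      ring
    have := Fintype.sum_equiv (hinv.toPerm) (fun σ => chi A σ)
      (fun σ => - chi A σ) (by
        intro σ
        simp only [Function.Involutive.coe_toPerm]
        rw [hflip σ]
        ring)
    rw [Finset.sum_neg_distrib] at this
    linarith

lemma exp_mul_chi (c : ℝ) (M : Finset V) (σ : V → Bool) :
    Real.exp (c * chi M σ) = Real.cosh c + Real.sinh c * chi M σ := by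
  rcases chi_pm M σ with hp | hp <;> rw [hp]
  · rw [mul_one, mul_one, Real.cosh_add_sinh]
  · rw [mul_neg_one, mul_neg_one, ← Real.cosh_sub_sinh]; ring

lemma abs_sum_exp_chi_le {ι : Type*} [DecidableEq ι] (T : Finset ι) (m : ι → Finset V)
    (c : ι → ℝ) (A : Finset V) :
    |∑ σ : V → Bool, Real.exp (∑ t ∈ T, c t * chi (m t) σ) * chi A σ| ≤
      ∑ σ : V → Bool, Real.exp (∑ t ∈ T, |c t| * chi (m t) σ) * chi A σ := by
  induction T using Finset.induction_on generalizing A with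
  | empty =>
      simp only [Finset.sum_empty, Real.exp_zero, one_mul]
      rw [abs_of_nonneg (sum_chi_nonneg A)]
  | @insert a s ha ih =>
      have key : ∀ (c' : ι → ℝ) (B : Finset V),
          (∑ σ : V → Bool, Real.exp (∑ t ∈ insert a s, c' t * chi (m t) σ) * chi B σ)
            = Real.cosh (c' a) *
                ∑ σ : V → Bool, Real.exp (∑ t ∈ s, c' t * chi (m t) σ) * chi B σ
              + Real.sinh (c' a) *
                ∑ σ : V → Bool, Real.exp (∑ t ∈ s, c' t * chi (m t) σ) * chi (m a ∆ B) σ := by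
        intro c' B
        rw [Finset.mul_sum, Finset.mul_sum, ← Finset.sum_add_distrib]
        refine Finset.sum_congr rfl fun σ _ => ?_
        rw [Finset.sum_insert ha, Real.exp_add, exp_mul_chi, ← chi_mul]
        ring
      rw [key c A, key (fun t => |c t|) A]
      refine (abs_add_le _ _).trans ?_
      rw [abs_mul, abs_mul, Real.abs_sinh]
      have hc : |Real.cosh (c a)| = Real.cosh |c a| := by
        rw [abs_of_pos (Real.cosh_pos _), Real.cosh_abs]
      rw [hc]
      exact add_le_add
        (mul_le_mul_of_nonneg_left (ih A) (Real.cosh_pos _).le)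
        (mul_le_mul_of_nonneg_left (ih (m a ∆ A)) (Real.sinh_nonneg_iff.mpr (abs_nonneg _)))

lemma chi_pair (a b : V) (σ : V → Bool) :
    chi (({a} : Finset V) ∆ {b}) σ = sp (σ a) * sp (σ b) := by
  rw [← chi_mul, chi_singleton, chi_singleton]

/-- The Boltzmann weight. -/
noncomputable def wgt (E : Finset (V × V)) (J : V × V → ℝ) (h : V → ℝ) (σ : V → Bool) : ℝ :=
  Real.exp ((∑ e ∈ E, J e * sp (σ e.1) * sp (σ e.2)) + ∑ x : V, h x * sp (σ x))

lemma gpart_eq (E : Finset (V × V)) (J : V × V → ℝ) (h : V → ℝ) :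
    gpart E J h = ∑ σ : V → Bool, wgt E J h σ := rfl

noncomputable def scor (E : Finset (V × V)) (J : V × V → ℝ) (h : V → ℝ) (i j : V) : ℝ :=
  ∑ σ : V → Bool, wgt E J h σ * (sp (σ i) * sp (σ j))

noncomputable def smag (E : Finset (V × V)) (J : V × V → ℝ) (h : V → ℝ) (i : V) : ℝ :=
  ∑ σ : V → Bool, wgt E J h σ * sp (σ i)

/-- The duplicated-system sum. -/
noncomputable def dsum (E : Finset (V × V)) (J : V × V → ℝ) (h : V → ℝ) (i j : V) : ℝ :=
  ∑ η : V → Bool, (∑ σ : V → Bool,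
      Real.exp ((∑ e ∈ E, (J e * (1 + sp (η e.1) * sp (η e.2))) * (sp (σ e.1) * sp (σ e.2)))
        + ∑ x : V, (h x * (1 + sp (η x))) * sp (σ x)) * (sp (σ i) * sp (σ j)))
    * ((1 - sp (η i)) * (1 - sp (η j)))

lemma dup (E : Finset (V × V)) (J : V × V → ℝ) (h : V → ℝ) (i j : V) :
    dsum E J h i j
      = 2 * (gpart E J h * scor E J h i j - smag E J h i * smag E J h j) := by
  have hinv : ∀ σ : V → Bool,
      Function.Involutive (fun (η : V → Bool) => (fun x => σ x == η x)) := by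
    intro σ η
    funext x
    show (σ x == (σ x == η x)) = η x
    cases σ x <;> cases η x <;> rfl
  have hpt : ∀ σ η : V → Bool,
      Real.exp ((∑ e ∈ E, (J e * (1 + sp (η e.1) * sp (η e.2))) * (sp (σ e.1) * sp (σ e.2)))
          + ∑ x : V, (h x * (1 + sp (η x))) * sp (σ x)) * (sp (σ i) * sp (σ j))
        * ((1 - sp (η i)) * (1 - sp (η j)))
      = wgt E J h σ * wgt E J h (fun x => σ x == η x) *
          ((sp (σ i) - sp (σ i == η i)) * (sp (σ j) - sp (σ j == η j))) := by
    intro σ η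
    have hexp : ((∑ e ∈ E, J e * sp (σ e.1) * sp (σ e.2)) + ∑ x : V, h x * sp (σ x))
          + ((∑ e ∈ E, J e * sp (σ e.1 == η e.1) * sp (σ e.2 == η e.2))
              + ∑ x : V, h x * sp (σ x == η x))
        = (∑ e ∈ E, (J e * (1 + sp (η e.1) * sp (η e.2))) * (sp (σ e.1) * sp (σ e.2)))
          + ∑ x : V, (h x * (1 + sp (η x))) * sp (σ x) := by
      rw [add_add_add_comm, ← Finset.sum_add_distrib, ← Finset.sum_add_distrib]
      congr 1
      · refine Finset.sum_congr rfl fun e _ => ?_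
        rw [sp_beq, sp_beq]; ring
      · refine Finset.sum_congr rfl fun x _ => ?_
        rw [sp_beq]; ring
    simp only [wgt, ← Real.exp_add]
    rw [hexp]
    rw [sp_beq, sp_beq]
    ring
  calc dsum E J h i j
      = ∑ η : V → Bool, ∑ σ : V → Bool,
          Real.exp ((∑ e ∈ E, (J e * (1 + sp (η e.1) * sp (η e.2))) * (sp (σ e.1) * sp (σ e.2)))
            + ∑ x : V, (h x * (1 + sp (η x))) * sp (σ x)) * (sp (σ i) * sp (σ j))
          * ((1 - sp (η i)) * (1 - sp (η j))) := by
        exact Finset.sum_congr rfl fun η _ => Finset.sum_mul _ _ _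
    _ = ∑ σ : V → Bool, ∑ η : V → Bool,
          Real.exp ((∑ e ∈ E, (J e * (1 + sp (η e.1) * sp (η e.2))) * (sp (σ e.1) * sp (σ e.2)))
            + ∑ x : V, (h x * (1 + sp (η x))) * sp (σ x)) * (sp (σ i) * sp (σ j))
          * ((1 - sp (η i)) * (1 - sp (η j))) := Finset.sum_comm
    _ = ∑ σ : V → Bool, ∑ τ : V → Bool, wgt E J h σ * wgt E J h τ *
          ((sp (σ i) - sp (τ i)) * (sp (σ j) - sp (τ j))) := by
        refine Finset.sum_congr rfl fun σ _ => ?_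
        refine Fintype.sum_equiv ((hinv σ).toPerm) _ _ ?_
        intro η
        simpa using hpt σ η
    _ = ∑ σ : V → Bool,
          ((wgt E J h σ * (sp (σ i) * sp (σ j))) * gpart E J h
            - (wgt E J h σ * sp (σ i)) * smag E J h j
            - (wgt E J h σ * sp (σ j)) * smag E J h i
            + wgt E J h σ * scor E J h i j) := by
        refine Finset.sum_congr rfl fun σ _ => ?_
        rw [gpart_eq, smag, smag, scor, Finset.mul_sum, Finset.mul_sum, Finset.mul_sum,
          Finset.mul_sum, ← Finset.sum_sub_distrib, ← Finset.sum_sub_distrib,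
          ← Finset.sum_add_distrib]
        refine Finset.sum_congr rfl fun τ _ => ?_
        ring
    _ = 2 * (gpart E J h * scor E J h i j - smag E J h i * smag E J h j) := by
        rw [Finset.sum_add_distrib, Finset.sum_sub_distrib, Finset.sum_sub_distrib,
          ← Finset.sum_mul, ← Finset.sum_mul, ← Finset.sum_mul, ← Finset.sum_mul,
          ← scor, ← smag, ← smag, ← gpart_eq]
        ring

lemma core_eq (E : Finset (V × V)) (J' : V × V → ℝ) (h' : V → ℝ) (η : V → Bool) (i j : V) :
    (∑ σ : V → Bool,
        Real.exp ((∑ e ∈ E, (J' e * (1 + sp (η e.1) * sp (η e.2))) * (sp (σ e.1) * sp (σ e.2)))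
          + ∑ x : V, (h' x * (1 + sp (η x))) * sp (σ x)) * (sp (σ i) * sp (σ j)))
      = ∑ σ : V → Bool,
          Real.exp (∑ t ∈ E.disjSum Finset.univ,
            (Sum.elim (fun e => J' e * (1 + sp (η e.1) * sp (η e.2)))
              (fun x => h' x * (1 + sp (η x))) t)
            * chi ((Sum.elim (fun e => ({e.1} : Finset V) ∆ {e.2}) (fun x => ({x} : Finset V))) t) σ)
          * chi (({i} : Finset V) ∆ {j}) σ := by
  refine Finset.sum_congr rfl fun σ _ => ?_
  rw [Finset.sum_disjSum]
  simp only [Sum.elim_inl, Sum.elim_inr, chi_pair, chi_singleton]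

lemma abs_dsum_le (E : Finset (V × V)) (J : V × V → ℝ) (h : V → ℝ) (i j : V) :
    |dsum E J h i j| ≤ dsum E (fun e => |J e|) (fun x => |h x|) i j := by
  unfold dsum
  refine (Finset.abs_sum_le_sum_abs _ _).trans (Finset.sum_le_sum ?_)
  intro η _
  rw [abs_mul, abs_of_nonneg (mul_nonneg (one_sub_sp_nonneg _) (one_sub_sp_nonneg _))]
  refine mul_le_mul_of_nonneg_right ?_
    (mul_nonneg (one_sub_sp_nonneg _) (one_sub_sp_nonneg _))
  rw [core_eq E J h η i j, core_eq E (fun e => |J e|) (fun x => |h x|) η i j]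
  have key := abs_sum_exp_chi_le (E.disjSum Finset.univ)
    (Sum.elim (fun e => ({e.1} : Finset V) ∆ {e.2}) (fun x => ({x} : Finset V)))
    (Sum.elim (fun e => J e * (1 + sp (η e.1) * sp (η e.2))) (fun x => h x * (1 + sp (η x))))
    (({i} : Finset V) ∆ {j})
  have habs : ∀ t : (V × V) ⊕ V,
      |Sum.elim (fun e => J e * (1 + sp (η e.1) * sp (η e.2)))
        (fun x => h x * (1 + sp (η x))) t|
      = Sum.elim (fun e => |J e| * (1 + sp (η e.1) * sp (η e.2)))
        (fun x => |h x| * (1 + sp (η x))) t := by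
    rintro (e | x)
    · simp only [Sum.elim_inl, abs_mul, abs_of_nonneg (one_add_sp_mul_sp_nonneg _ _)]
    · simp only [Sum.elim_inr, abs_mul, abs_of_nonneg (one_add_sp_nonneg _)]
  simp only [habs] at key
  exact key

lemma gpart_pos (E : Finset (V × V)) (J : V × V → ℝ) (h : V → ℝ) : 0 < gpart E J h :=
  Finset.sum_pos (fun σ _ => Real.exp_pos _) Finset.univ_nonempty

theorem cov_signed_le_cov_absolute (E : Finset (V × V)) (J : V × V → ℝ) (h : V → ℝ)
    (i j : V) :
    |gcov E J h i j| ≤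
      gcov E (fun e => |J e|) (fun x => |h x|) i j *
        (gpart E (fun e => |J e|) (fun x => |h x|) / gpart E J h) ^ 2 := by
  have hZ := gpart_pos E J h
  have hZa := gpart_pos E (fun e => |J e|) (fun x => |h x|)
  have hkey : |gpart E J h * scor E J h i j - smag E J h i * smag E J h j|
      ≤ gpart E (fun e => |J e|) (fun x => |h x|) *
          scor E (fun e => |J e|) (fun x => |h x|) i j
        - smag E (fun e => |J e|) (fun x => |h x|) i *
          smag E (fun e => |J e|) (fun x => |h x|) j := by
    have h1 := abs_dsum_le E J h i j
    rw [dup, dup, abs_mul, abs_of_pos (by norm_num : (0:ℝ) < 2)] at h1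
    linarith
  have hg : ∀ (J' : V × V → ℝ) (h' : V → ℝ), gcov E J' h' i j
      = (gpart E J' h' * scor E J' h' i j - smag E J' h' i * smag E J' h' j)
          / (gpart E J' h') ^ 2 := by
    intro J' h'
    have hZ' := (gpart_pos E J' h').ne'
    show scor E J' h' i j / gpart E J' h'
        - (smag E J' h' i / gpart E J' h') * (smag E J' h' j / gpart E J' h') = _
    field_simp
  rw [hg J h, hg (fun e => |J e|) (fun x => |h x|)]
  rw [abs_div, abs_of_pos (pow_pos hZ 2)]
  rw [div_pow, div_mul_div_comm,
    mul_comm ((gpart E (fun e => |J e|) (fun x => |h x|)) ^ 2) (gpart E J h ^ 2),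
    mul_div_mul_right _ _ (ne_of_gt (pow_pos hZa 2))]
  gcongr
end
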